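/- arXiv:2404.08116 — 3 statements merged into one kernel-verified Lean document; each statement's English description precedes it below -/
import Mathlib

section
/- Let σ_m be the normalized surface (area) measure on the unit sphere S^{m-1} ⊂ ℝ^m, m ≥ 2. Then for every ν ≥ 1 there is a constant M_ν, independent of m, such that for every unit vector u ∈ ℝ^m: ∫_{S^{m-1}} |log |⟨a,u⟩||^ν dσ_m(a) ≤ M_ν (log m)^ν. -/
open MeasureTheory Real Metric

namespace StmtAux

open Set

lemma J_eq {q : ℝ} (hq : -1 < q) :
    ∫ x in Ioi (0:ℝ), x ^ q * exp (-π * x ^ (2:ℝ))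
      = π ^ (-(q+1)/2) * (1/2) * Real.Gamma ((q+1)/2) :=
  integral_rpow_mul_exp_neg_mul_rpow two_pos hq pi_pos

lemma J_pos {q : ℝ} (hq : -1 < q) :
    0 < ∫ x in Ioi (0:ℝ), x ^ q * exp (-π * x ^ (2:ℝ)) := by
  rw [J_eq hq]
  have h : 0 < Real.Gamma ((q+1)/2) := Real.Gamma_pos_of_pos (by linarith)
  positivity

lemma pointwise_bound {ν s t : ℝ} (hν : 1 ≤ ν) (hs : 0 < s) (ht0 : 0 ≤ t)
    (ht1 : t ≤ 1) : |Real.log t| ^ ν ≤ (ν / s) ^ ν * t ^ (-s) := by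
  have hν0 : 0 < ν := lt_of_lt_of_le one_pos hν
  rcases eq_or_lt_of_le ht0 with h0 | h0
  · rw [← h0, Real.log_zero, abs_zero, Real.zero_rpow hν0.ne',
      Real.zero_rpow (neg_ne_zero.mpr hs.ne'), mul_zero]
  · have hlog : Real.log t ≤ 0 := Real.log_nonpos ht0 ht1
    set y := -Real.log t with hy
    have hy0 : 0 ≤ y := by simp only [hy]; linarith
    have habs : |Real.log t| = y := abs_of_nonpos hlog
    have hz : s * y / ν ≤ exp (s * y / ν) := by linarith [Real.add_one_le_exp (s * y / ν)]
    have h1 : y ≤ (ν / s) * exp (s * y / ν) := by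
      have h1' := mul_le_mul_of_nonneg_left hz (div_nonneg hν0.le hs.le)
      calc y = (ν / s) * (s * y / ν) := by field_simp
        _ ≤ _ := h1'
    have h2 : y ^ ν ≤ ((ν / s) * exp (s * y / ν)) ^ ν := Real.rpow_le_rpow hy0 h1 hν0.le
    rw [habs]
    calc y ^ ν ≤ ((ν / s) * exp (s * y / ν)) ^ ν := h2
      _ = (ν / s) ^ ν * exp (s * y / ν) ^ ν := Real.mul_rpow (by positivity) (exp_nonneg _)
      _ = (ν / s) ^ ν * exp (s * y) := by
          rw [← Real.exp_mul]
          congr 2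
          field_simp
      _ = (ν / s) ^ ν * t ^ (-s) := by
          rw [Real.rpow_def_of_pos h0]
          congr 2
          rw [hy]; ring

lemma volumeIoiPow_integral (n : ℕ) (g : ℝ → ℝ) :
    ∫ r : Ioi (0:ℝ), g r ∂(MeasureTheory.Measure.volumeIoiPow n)
      = ∫ r in Ioi (0:ℝ), r ^ n * g r := by
  simp only [MeasureTheory.Measure.volumeIoiPow, ENNReal.ofReal]
  rw [integral_withDensity_eq_integral_smul ((measurable_subtype_coe.pow_const _).real_toNNReal)
      (fun r : Ioi (0:ℝ) => g r),
    integral_subtype_comap measurableSet_Ioi (fun a : ℝ => Real.toNNReal (a ^ n) • g a)]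
  refine setIntegral_congr_fun measurableSet_Ioi fun x hx => ?_
  rw [NNReal.smul_def, Real.coe_toNNReal _ (pow_nonneg (le_of_lt hx) _), smul_eq_mul]

lemma glue {m : ℕ} (hm : 2 ≤ m) (f : sphere (0 : EuclideanSpace ℝ (Fin m)) 1 → ℝ) (g : ℝ → ℝ)
    (F : EuclideanSpace ℝ (Fin m) → ℝ)
    (hF : ∀ x : ({0}ᶜ : Set (EuclideanSpace ℝ (Fin m))), F x =
        f (homeomorphUnitSphereProd (EuclideanSpace ℝ (Fin m)) x).1
          * g ‖(x : EuclideanSpace ℝ (Fin m))‖) :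
    ∫ x, F x = (∫ a, f a ∂(volume : Measure (EuclideanSpace ℝ (Fin m))).toSphere)
      * ∫ r in Ioi (0:ℝ), r ^ (m - 1) * g r := by
  haveI : NeZero m := ⟨by omega⟩
  have hdim : Module.finrank ℝ (EuclideanSpace ℝ (Fin m)) = m := finrank_euclideanSpace_fin
  haveI : Nontrivial (EuclideanSpace ℝ (Fin m)) :=
    Module.nontrivial_of_finrank_pos (R := ℝ) (by rw [hdim]; omega)
  calc ∫ x, F x
      = ∫ x : ({0}ᶜ : Set (EuclideanSpace ℝ (Fin m))), F x ∂((volume).comap Subtype.val) := by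
        rw [integral_subtype_comap (measurableSet_singleton _).compl F,
          MeasureTheory.restrict_compl_singleton]
    _ = ∫ p : sphere (0 : EuclideanSpace ℝ (Fin m)) 1 × Ioi (0:ℝ), f p.1 * g p.2
          ∂((volume : Measure (EuclideanSpace ℝ (Fin m))).toSphere.prod
            (.volumeIoiPow (Module.finrank ℝ (EuclideanSpace ℝ (Fin m)) - 1))) := by
        rw [← (volume : Measure (EuclideanSpace ℝ (Fin m))).measurePreserving_homeomorphUnitSphereProd.integral_comp
          (Homeomorph.measurableEmbedding _) (fun p => f p.1 * g p.2)]
        refine integral_congr_ae (Filter.Eventually.of_forall fun x => ?_)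
        show F ↑x = _
        rw [hF x]
        simp
    _ = (∫ a, f a ∂(volume : Measure (EuclideanSpace ℝ (Fin m))).toSphere)
          * ∫ r : Ioi (0:ℝ), g r ∂(MeasureTheory.Measure.volumeIoiPow
              (Module.finrank ℝ (EuclideanSpace ℝ (Fin m)) - 1)) :=
        integral_prod_mul f (fun r : Ioi (0:ℝ) => g r)
    _ = _ := by rw [volumeIoiPow_integral, hdim]

lemma integrable_comp_abs' {f : ℝ → ℝ} (hf : IntegrableOn f (Ioi 0)) :
    Integrable fun x => f |x| := by
  have hIoi : IntegrableOn (fun x => f |x|) (Ioi 0) := by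
    refine (integrableOn_congr_fun (fun x hx => ?_) measurableSet_Ioi).mpr hf
    rw [abs_of_pos hx]
  have int_Iic : IntegrableOn (fun x ↦ f |x|) (Iic 0) := by
    rw [← Measure.map_neg_eq_self (volume : Measure ℝ)]
    let m : MeasurableEmbedding fun x : ℝ => -x := (Homeomorph.neg ℝ).measurableEmbedding
    rw [m.integrableOn_map_iff]
    simp_rw [Function.comp_def, abs_neg, neg_preimage, neg_Iic, neg_zero]
    exact (integrableOn_Ici_iff_integrableOn_Ioi).mpr hIoi
  rw [← integrableOn_univ, ← Iic_union_Ioi (a := (0:ℝ))]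
  exact int_Iic.union hIoi

lemma oneD {s : ℝ} (hs0 : 0 < s) (hs1 : s < 1) :
    Integrable (fun t : ℝ => |t| ^ (-s) * exp (-π * t ^ 2)) ∧
    ∫ t : ℝ, |t| ^ (-s) * exp (-π * t ^ 2) = π ^ (-(-s+1)/2) * Real.Gamma ((-s+1)/2) := by
  have hios : IntegrableOn (fun t : ℝ => t ^ (-s) * exp (-π * t ^ 2)) (Ioi 0) :=
    integrableOn_rpow_mul_exp_neg_mul_sq pi_pos (by linarith)
  have key : (fun x : ℝ => |x| ^ (-s) * exp (-π * x ^ 2))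
      = fun x => (fun t : ℝ => t ^ (-s) * exp (-π * t ^ 2)) |x| := by
    funext x; simp only [sq_abs]
  constructor
  · rw [key]; exact integrable_comp_abs' hios
  · rw [key, integral_comp_abs (f := fun t : ℝ => t ^ (-s) * exp (-π * t ^ 2))]
    have h2 : ∫ x in Ioi (0:ℝ), x ^ (-s) * exp (-π * x ^ 2)
        = ∫ x in Ioi (0:ℝ), x ^ (-s) * exp (-π * x ^ (2:ℝ)) := by
      refine setIntegral_congr_fun measurableSet_Ioi fun x hx => ?_
      norm_num [Real.rpow_natCast]
    rw [h2, J_eq (by linarith)]; ring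

lemma pi_int {m : ℕ} [NeZero m] {s : ℝ} (hs0 : 0 < s) (hs1 : s < 1) :
    Integrable (fun y : EuclideanSpace ℝ (Fin m) => |y 0| ^ (-s) * exp (-π * ‖y‖ ^ 2)) ∧
    ∫ y : EuclideanSpace ℝ (Fin m), |y 0| ^ (-s) * exp (-π * ‖y‖ ^ 2)
      = π ^ (-(-s+1)/2) * Real.Gamma ((-s+1)/2) := by
  classical
  set G : Fin m → ℝ → ℝ := fun i t => (if i = 0 then |t| ^ (-s) else 1) * exp (-π * t ^ 2)
    with hG
  have hGint : ∀ i, Integrable (G i) := by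
    intro i
    by_cases h : i = 0
    · simpa [hG, h] using (oneD hs0 hs1).1
    · simpa [hG, h] using integrable_exp_neg_mul_sq pi_pos
  have hprod : ∀ y : EuclideanSpace ℝ (Fin m),
      |y 0| ^ (-s) * exp (-π * ‖y‖ ^ 2) = ∏ i, G i (y i) := by
    intro y
    have hnorm : ‖y‖ ^ 2 = ∑ i, (y i) ^ 2 := by
      rw [EuclideanSpace.norm_eq, Real.sq_sqrt (Finset.sum_nonneg fun i _ => sq_nonneg _)]
      simp [sq_abs]
    simp only [hG, Finset.prod_mul_distrib]
    rw [Finset.prod_ite_eq' Finset.univ (0 : Fin m) (fun i => |y i| ^ (-s))]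
    rw [hnorm, Finset.mul_sum, Real.exp_sum]
    simp
  have e := MeasurePreserving.symm _ (EuclideanSpace.volume_preserving_symm_measurableEquiv_toLp (Fin m))
  have hcomp : (fun y : EuclideanSpace ℝ (Fin m) => |y 0| ^ (-s) * exp (-π * ‖y‖ ^ 2))
      ∘ (MeasurableEquiv.toLp 2 (Fin m → ℝ)).symm.symm
      = fun x : Fin m → ℝ => ∏ i, G i (x i) := by
    funext x
    simp only [Function.comp_apply]
    rw [hprod]
    rfl
  constructor
  · rw [← e.integrable_comp_emb (MeasurableEquiv.measurableEmbedding _), hcomp]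
    exact Integrable.fintype_prod (𝕜 := ℝ) hGint
  · rw [← e.integral_comp (MeasurableEquiv.measurableEmbedding _)]
    have h3 : ∫ x : Fin m → ℝ, ((fun y : EuclideanSpace ℝ (Fin m) =>
          |y 0| ^ (-s) * exp (-π * ‖y‖ ^ 2)) ((MeasurableEquiv.toLp 2 (Fin m → ℝ)).symm.symm x))
        = ∫ x : Fin m → ℝ, ∏ i, G i (x i) := by
      congr 1
    rw [h3, MeasureTheory.integral_fintype_prod_volume_eq_prod (𝕜 := ℝ) G]
    have hval : ∀ i : Fin m, (∫ t, G i t)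
        = if i = 0 then π ^ (-(-s+1)/2) * Real.Gamma ((-s+1)/2) else 1 := by
      intro i
      by_cases h : i = 0
      · simp only [hG, h, if_true]
        exact (oneD hs0 hs1).2
      · simp only [hG, h, if_false, one_mul]
        rw [integral_gaussian, div_self pi_ne_zero, Real.sqrt_one]
    rw [Finset.prod_congr rfl fun i _ => hval i,
      Finset.prod_ite_eq' Finset.univ (0 : Fin m)
        (fun _ => π ^ (-(-s+1)/2) * Real.Gamma ((-s+1)/2))]
    simp

lemma exists_onb {m : ℕ} [NeZero m] (u : EuclideanSpace ℝ (Fin m)) (hu : ‖u‖ = 1) :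
    ∃ b : OrthonormalBasis (Fin m) ℝ (EuclideanSpace ℝ (Fin m)), b 0 = u := by
  have horth : Orthonormal ℝ (({0} : Set (Fin m)).restrict (fun _ : Fin m => u)) := by
    constructor
    · intro i; exact hu
    · intro i j hij
      exact absurd (Subtype.ext (by
        have hi := i.2; have hj := j.2
        simp only [Set.mem_singleton_iff] at hi hj
        rw [hi, hj])) hij
  obtain ⟨b, hb⟩ := horth.exists_orthonormalBasis_extension_of_card_eq
    (by simp [finrank_euclideanSpace_fin])
  exact ⟨b, hb 0 rfl⟩

lemma rotate_inner {m : ℕ} [NeZero m] (u : EuclideanSpace ℝ (Fin m)) (hu : ‖u‖ = 1)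
    {s : ℝ} (hs0 : 0 < s) (hs1 : s < 1) :
    Integrable (fun x : EuclideanSpace ℝ (Fin m) =>
        |(inner ℝ x u : ℝ)| ^ (-s) * exp (-π * ‖x‖ ^ 2)) ∧
    ∫ x : EuclideanSpace ℝ (Fin m), |(inner ℝ x u : ℝ)| ^ (-s) * exp (-π * ‖x‖ ^ 2)
      = π ^ (-(-s+1)/2) * Real.Gamma ((-s+1)/2) := by
  obtain ⟨b, hb⟩ := exists_onb u hu
  have hmp := b.measurePreserving_repr_symm
  have hemb : MeasurableEmbedding b.repr.symm :=
    b.repr.symm.toHomeomorph.measurableEmbedding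
  have hinner : ∀ y : EuclideanSpace ℝ (Fin m),
      (inner ℝ (b.repr.symm y) u : ℝ) = y 0 := by
    intro y
    have hu' : u = b.repr.symm (EuclideanSpace.single 0 1) := by
      rw [← hb, ← b.repr_self 0, b.repr.symm_apply_apply]
    rw [hu', b.repr.symm.inner_map_map]
    simp [EuclideanSpace.inner_single_right]
  have hcomp : (fun x : EuclideanSpace ℝ (Fin m) =>
        |(inner ℝ x u : ℝ)| ^ (-s) * exp (-π * ‖x‖ ^ 2)) ∘ b.repr.symm
      = fun y : EuclideanSpace ℝ (Fin m) => |y 0| ^ (-s) * exp (-π * ‖y‖ ^ 2) := by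
    funext y
    simp only [Function.comp_apply]
    rw [hinner y, b.repr.symm.norm_map]
  constructor
  · rw [← hmp.integrable_comp_emb hemb, hcomp]
    exact (pi_int hs0 hs1).1
  · rw [← hmp.integral_comp hemb]
    have h3 : (∫ y : EuclideanSpace ℝ (Fin m), (fun x : EuclideanSpace ℝ (Fin m) =>
          |(inner ℝ x u : ℝ)| ^ (-s) * exp (-π * ‖x‖ ^ 2)) (b.repr.symm y))
        = ∫ y : EuclideanSpace ℝ (Fin m), |y 0| ^ (-s) * exp (-π * ‖y‖ ^ 2) := by
      congr 1
    rw [h3]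
    exact (pi_int hs0 hs1).2

lemma Gamma_le_one {x : ℝ} (h1 : 1 ≤ x) (h2 : x ≤ 2) : Real.Gamma x ≤ 1 := by
  have := Real.convexOn_Gamma.2 (Set.mem_Ioi.mpr one_pos) (Set.mem_Ioi.mpr two_pos)
    (show (0:ℝ) ≤ 2 - x by linarith) (show (0:ℝ) ≤ x - 1 by linarith) (by ring)
  calc Real.Gamma x = Real.Gamma ((2 - x) • (1:ℝ) + (x - 1) • (2:ℝ)) := by
        congr 1; simp [smul_eq_mul]; ring
    _ ≤ (2 - x) • Real.Gamma 1 + (x - 1) • Real.Gamma 2 := this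
    _ = 1 := by rw [Real.Gamma_one, Real.Gamma_two]; simp; ring


lemma hF2_aux {m : ℕ} (u : EuclideanSpace ℝ (Fin m)) {s : ℝ}
    (x : ({0}ᶜ : Set (EuclideanSpace ℝ (Fin m)))) :
    |(inner ℝ (x : EuclideanSpace ℝ (Fin m)) u : ℝ)| ^ (-s)
        * exp (-π * ‖(x : EuclideanSpace ℝ (Fin m))‖ ^ 2)
      = (fun a : sphere (0 : EuclideanSpace ℝ (Fin m)) 1 =>
          |(inner ℝ ((a : EuclideanSpace ℝ (Fin m))) u : ℝ)| ^ (-s))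
          (homeomorphUnitSphereProd (EuclideanSpace ℝ (Fin m)) x).1
        * (fun r : ℝ => r ^ (-s) * exp (-π * r ^ 2)) ‖(x : EuclideanSpace ℝ (Fin m))‖ := by
  have hx0 : (x : EuclideanSpace ℝ (Fin m)) ≠ 0 := x.2
  have hxn : (0:ℝ) < ‖(x : EuclideanSpace ℝ (Fin m))‖ := norm_pos_iff.mpr hx0
  have h1 : ‖(x : EuclideanSpace ℝ (Fin m))‖⁻¹ ^ (-s) * ‖(x : EuclideanSpace ℝ (Fin m))‖ ^ (-s)
      = 1 := by
    rw [← Real.mul_rpow (inv_nonneg.mpr hxn.le) hxn.le, inv_mul_cancel₀ hxn.ne', Real.one_rpow]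
  have key : |(inner ℝ (((homeomorphUnitSphereProd (EuclideanSpace ℝ (Fin m)) x).1
        : sphere (0 : EuclideanSpace ℝ (Fin m)) 1) : EuclideanSpace ℝ (Fin m)) u : ℝ)| ^ (-s)
      = ‖(x : EuclideanSpace ℝ (Fin m))‖⁻¹ ^ (-s)
        * |(inner ℝ (x : EuclideanSpace ℝ (Fin m)) u : ℝ)| ^ (-s) := by
    rw [homeomorphUnitSphereProd_apply_fst_coe, real_inner_smul_left, abs_mul, abs_inv, abs_norm,
      Real.mul_rpow (inv_nonneg.mpr hxn.le) (abs_nonneg _)]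
  simp only []
  rw [key, show ‖(x : EuclideanSpace ℝ (Fin m))‖⁻¹ ^ (-s)
      * |(inner ℝ (x : EuclideanSpace ℝ (Fin m)) u : ℝ)| ^ (-s)
      * (‖(x : EuclideanSpace ℝ (Fin m))‖ ^ (-s) * exp (-π * ‖(x : EuclideanSpace ℝ (Fin m))‖ ^ 2))
      = (‖(x : EuclideanSpace ℝ (Fin m))‖⁻¹ ^ (-s) * ‖(x : EuclideanSpace ℝ (Fin m))‖ ^ (-s))
        * (|(inner ℝ (x : EuclideanSpace ℝ (Fin m)) u : ℝ)| ^ (-s)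
          * exp (-π * ‖(x : EuclideanSpace ℝ (Fin m))‖ ^ 2)) from by ring, h1, one_mul]

lemma J2_eq {m : ℕ} (hm : 2 ≤ m) {s : ℝ} (hs1 : s < 1) :
    ∫ r in Ioi (0:ℝ), r ^ (m - 1) * (r ^ (-s) * exp (-π * r ^ 2))
      = π ^ (-(((m:ℝ) - 1 - s)+1)/2) * (1/2) * Real.Gamma ((((m:ℝ) - 1 - s)+1)/2) := by
  have hc : ∀ r ∈ Ioi (0:ℝ), r ^ (m - 1) * (r ^ (-s) * exp (-π * r ^ 2))
      = r ^ ((m:ℝ) - 1 - s) * exp (-π * r ^ (2:ℝ)) := by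
    intro r hr
    have hr0 : (0:ℝ) < r := hr
    rw [show ((m:ℝ) - 1 - s) = ((m:ℝ) - 1) + (-s) by ring, Real.rpow_add hr0,
      show ((m:ℝ) - 1) = ((m - 1 : ℕ) : ℝ) by push_cast [Nat.cast_sub (by omega : 1 ≤ m)]; ring,
      Real.rpow_natCast, show ((2:ℝ) = ((2:ℕ):ℝ)) by norm_num, Real.rpow_natCast]
    ring
  have h2 : (2:ℝ) ≤ (m:ℝ) := by exact_mod_cast hm
  rw [setIntegral_congr_fun measurableSet_Ioi hc, J_eq (by linarith)]

lemma J1_eq {m : ℕ} (hm : 2 ≤ m) :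
    ∫ r in Ioi (0:ℝ), r ^ (m - 1) * exp (-π * r ^ 2)
      = π ^ (-(((m:ℝ) - 1)+1)/2) * (1/2) * Real.Gamma ((((m:ℝ) - 1)+1)/2) := by
  have hc : ∀ r ∈ Ioi (0:ℝ), r ^ (m - 1) * exp (-π * r ^ 2)
      = r ^ ((m:ℝ) - 1) * exp (-π * r ^ (2:ℝ)) := by
    intro r hr
    rw [show ((m:ℝ) - 1) = ((m - 1 : ℕ) : ℝ) by push_cast [Nat.cast_sub (by omega : 1 ≤ m)]; ring,
      Real.rpow_natCast, show ((2:ℝ) = ((2:ℕ):ℝ)) by norm_num, Real.rpow_natCast]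
  have h2 : (2:ℝ) ≤ (m:ℝ) := by exact_mod_cast hm
  rw [setIntegral_congr_fun measurableSet_Ioi hc, J_eq (by linarith)]

lemma sphere_identity {m : ℕ} (hm : 2 ≤ m) (u : EuclideanSpace ℝ (Fin m)) (hu : ‖u‖ = 1)
    {s : ℝ} (hs0 : 0 < s) (hs1 : s < 1) :
    (∫ a : sphere (0 : EuclideanSpace ℝ (Fin m)) 1,
        |(inner ℝ ((a : EuclideanSpace ℝ (Fin m))) u : ℝ)| ^ (-s)
        ∂(volume : Measure (EuclideanSpace ℝ (Fin m))).toSphere)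
      * ∫ r in Ioi (0:ℝ), r ^ (m - 1) * (r ^ (-s) * exp (-π * r ^ 2))
      = π ^ (-(-s+1)/2) * Real.Gamma ((-s+1)/2) := by
  haveI : NeZero m := ⟨by omega⟩
  rw [← glue hm (fun a : sphere (0 : EuclideanSpace ℝ (Fin m)) 1 =>
      |(inner ℝ ((a : EuclideanSpace ℝ (Fin m))) u : ℝ)| ^ (-s))
      (fun r : ℝ => r ^ (-s) * exp (-π * r ^ 2))
      (fun x : EuclideanSpace ℝ (Fin m) => |(inner ℝ x u : ℝ)| ^ (-s) * exp (-π * ‖x‖ ^ 2))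
      (fun x => hF2_aux u x)]
  exact (rotate_inner u hu hs0 hs1).2

lemma toSphere_identity {m : ℕ} (hm : 2 ≤ m) :
    ((volume : Measure (EuclideanSpace ℝ (Fin m))).toSphere Set.univ).toReal
      * ∫ r in Ioi (0:ℝ), r ^ (m - 1) * exp (-π * r ^ 2) = 1 := by
  haveI : NeZero m := ⟨by omega⟩
  have hglue1 := glue hm (fun _ => (1:ℝ)) (fun r => exp (-π * r ^ 2))
      (fun x : EuclideanSpace ℝ (Fin m) => exp (-π * ‖x‖ ^ 2)) (fun x => by simp)
  have hL1 : ∫ x : EuclideanSpace ℝ (Fin m), exp (-π * ‖x‖ ^ 2) = 1 := by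
    have h := GaussianFourier.integral_rexp_neg_mul_sq_norm
      (V := EuclideanSpace ℝ (Fin m)) pi_pos
    rw [h, div_self pi_ne_zero, Real.one_rpow]
  simp only [integral_const, smul_eq_mul, mul_one, measureReal_def] at hglue1
  rw [← hglue1]
  exact hL1

lemma f2_integrable {m : ℕ} (hm : 2 ≤ m) (u : EuclideanSpace ℝ (Fin m)) (hu : ‖u‖ = 1)
    {s : ℝ} (hs0 : 0 < s) (hs1 : s < 1) :
    Integrable (fun a : sphere (0 : EuclideanSpace ℝ (Fin m)) 1 =>
        |(inner ℝ ((a : EuclideanSpace ℝ (Fin m))) u : ℝ)| ^ (-s))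
      (volume : Measure (EuclideanSpace ℝ (Fin m))).toSphere := by
  haveI : NeZero m := ⟨by omega⟩
  have hdim : Module.finrank ℝ (EuclideanSpace ℝ (Fin m)) = m := finrank_euclideanSpace_fin
  haveI : Nontrivial (EuclideanSpace ℝ (Fin m)) :=
    Module.nontrivial_of_finrank_pos (R := ℝ) (by rw [hdim]; omega)
  have hmeas : MeasurableSet ({0}ᶜ : Set (EuclideanSpace ℝ (Fin m))) :=
    (measurableSet_singleton _).compl
  have hF2int := (rotate_inner u hu hs0 hs1).1
  have h5 : Integrable (fun x : EuclideanSpace ℝ (Fin m) =>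
      |(inner ℝ x u : ℝ)| ^ (-s) * exp (-π * ‖x‖ ^ 2))
      ((volume : Measure (EuclideanSpace ℝ (Fin m))).restrict {0}ᶜ) := hF2int.integrableOn
  rw [← map_comap_subtype_coe hmeas,
    (MeasurableEmbedding.subtype_coe hmeas).integrable_map_iff] at h5
  have h7 : Integrable (fun p : sphere (0 : EuclideanSpace ℝ (Fin m)) 1 × Ioi (0:ℝ) =>
      |(inner ℝ ((p.1 : EuclideanSpace ℝ (Fin m))) u : ℝ)| ^ (-s)
        * ((p.2 : ℝ) ^ (-s) * exp (-π * (p.2:ℝ) ^ 2)))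
      ((volume : Measure (EuclideanSpace ℝ (Fin m))).toSphere.prod
        (.volumeIoiPow (Module.finrank ℝ (EuclideanSpace ℝ (Fin m)) - 1))) := by
    rw [← (volume : Measure (EuclideanSpace ℝ (Fin m))).measurePreserving_homeomorphUnitSphereProd.integrable_comp_emb
      (Homeomorph.measurableEmbedding _)]
    refine h5.congr (Filter.Eventually.of_forall fun x => ?_)
    simp only [Function.comp_apply]
    rw [show (((homeomorphUnitSphereProd (EuclideanSpace ℝ (Fin m))) x).2 : ℝ)
      = ‖(x : EuclideanSpace ℝ (Fin m))‖ from by simp]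
    simpa using hF2_aux (s := s) u x
  have h8 := h7.integral_prod_left
  rw [hdim] at h8
  have hJ2' : ∫ r : Ioi (0:ℝ), ((r : ℝ) ^ (-s) * exp (-π * (r:ℝ) ^ 2))
      ∂(MeasureTheory.Measure.volumeIoiPow (m - 1))
      = ∫ r in Ioi (0:ℝ), r ^ (m - 1) * (r ^ (-s) * exp (-π * r ^ 2)) :=
    volumeIoiPow_integral (m - 1) (fun t : ℝ => t ^ (-s) * exp (-π * t ^ 2))
  have hJ2pos : 0 < ∫ r in Ioi (0:ℝ), r ^ (m - 1) * (r ^ (-s) * exp (-π * r ^ 2)) := by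
    rw [J2_eq hm hs1]
    have h : 0 < Real.Gamma ((((m:ℝ) - 1 - s)+1)/2) := by
      refine Real.Gamma_pos_of_pos ?_
      have : (2:ℝ) ≤ (m:ℝ) := by exact_mod_cast hm
      linarith
    positivity
  have hform : (fun a : sphere (0 : EuclideanSpace ℝ (Fin m)) 1 =>
        ∫ r : Ioi (0:ℝ), |(inner ℝ ((a : EuclideanSpace ℝ (Fin m))) u : ℝ)| ^ (-s)
          * ((r : ℝ) ^ (-s) * exp (-π * (r:ℝ) ^ 2))
          ∂(MeasureTheory.Measure.volumeIoiPow (m - 1)))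
      = (fun a : sphere (0 : EuclideanSpace ℝ (Fin m)) 1 =>
        (∫ r in Ioi (0:ℝ), r ^ (m - 1) * (r ^ (-s) * exp (-π * r ^ 2)))
          * |(inner ℝ ((a : EuclideanSpace ℝ (Fin m))) u : ℝ)| ^ (-s)) := by
    funext a
    rw [integral_const_mul, hJ2', mul_comm]
  rw [hform] at h8
  have h9 := h8.const_mul
    ((∫ r in Ioi (0:ℝ), r ^ (m - 1) * (r ^ (-s) * exp (-π * r ^ 2)))⁻¹)
  refine h9.congr (Filter.Eventually.of_forall fun a => ?_)
  show (∫ r in Ioi (0:ℝ), r ^ (m - 1) * (r ^ (-s) * exp (-π * r ^ 2)))⁻¹ *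
      ((∫ r in Ioi (0:ℝ), r ^ (m - 1) * (r ^ (-s) * exp (-π * r ^ 2))) *
        |(inner ℝ ((a : EuclideanSpace ℝ (Fin m))) u : ℝ)| ^ (-s))
    = |(inner ℝ ((a : EuclideanSpace ℝ (Fin m))) u : ℝ)| ^ (-s)
  rw [← mul_assoc, inv_mul_cancel₀ hJ2pos.ne', one_mul]


lemma alg1 {a b c A B C : ℝ} (hc : c ≠ 0) (hB : B ≠ 0) :
    (a * (1/2) * A) * ((b * C) / (c * (1/2) * B)) = (a * b / c) * (A * C / B) := by
  field_simp

lemma Gamma_ratio {x s : ℝ} (hx : 0 < x) (hs0 : 0 < s) (hs1 : s < 1) :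
    Real.Gamma (x + s/2) ≤ Real.Gamma x * x ^ (s/2) := by
  have h := Real.Gamma_mul_add_mul_le_rpow_Gamma_mul_rpow_Gamma hx
    (show (0:ℝ) < x + 1 by linarith) (show (0:ℝ) < 1 - s/2 by linarith)
    (show (0:ℝ) < s/2 by linarith) (by ring)
  have harg : (1 - s/2) * x + s/2 * (x+1) = x + s/2 := by ring
  rw [harg, Real.Gamma_add_one hx.ne'] at h
  have hG : 0 < Real.Gamma x := Real.Gamma_pos_of_pos hx
  calc Real.Gamma (x + s/2) ≤ Real.Gamma x ^ (1 - s/2) * (x * Real.Gamma x) ^ (s/2) := h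
    _ = Real.Gamma x * x ^ (s/2) := by
        rw [Real.mul_rpow hx.le hG.le]
        rw [show Real.Gamma x ^ (1 - s/2) * (x ^ (s/2) * Real.Gamma x ^ (s/2))
          = (Real.Gamma x ^ (1 - s/2) * Real.Gamma x ^ (s/2)) * x ^ (s/2) from by ring]
        rw [← Real.rpow_add hG, sub_add_cancel, Real.rpow_one]

end StmtAux

open StmtAux Set

set_option maxHeartbeats 4000000 in
/-- Log-moment bound on spheres: for every `ν ≥ 1` there is `M_ν`, independent of `m`,
such that for every `m ≥ 2` and every unit vector `u ∈ ℝ^m`, the integral of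
`|log |⟨a,u⟩||^ν` over the unit sphere `S^{m-1}` with respect to the normalized
surface measure is at most `M_ν (log m)^ν`. -/
theorem stmt4 (ν : ℝ) (hν : 1 ≤ ν) :
    ∃ M : ℝ, ∀ (m : ℕ), 2 ≤ m →
      ∀ u : EuclideanSpace ℝ (Fin m), ‖u‖ = 1 →
        ∫ a : sphere (0 : EuclideanSpace ℝ (Fin m)) 1,
            abs (Real.log (abs (inner ℝ ((a : EuclideanSpace ℝ (Fin m))) u : ℝ))) ^ ν
            ∂((Measure.toSphere (volume : Measure (EuclideanSpace ℝ (Fin m))) Set.univ)⁻¹ •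
                Measure.toSphere (volume : Measure (EuclideanSpace ℝ (Fin m))))
          ≤ M * (Real.log m) ^ ν := by
  have hlog2 : 0 < Real.log 2 := Real.log_pos (by norm_num)
  have hν0 : 0 < ν := lt_of_lt_of_le one_pos hν
  obtain ⟨C3, hC3⟩ : ∃ x : ℝ, x = 1 + ν / Real.log 2 := ⟨_, rfl⟩
  have hC3pos : 0 < C3 := by rw [hC3]; positivity
  obtain ⟨K, hK⟩ : ∃ x : ℝ, x = Real.exp (ν/2) * (2 * C3) := ⟨_, rfl⟩
  have hKpos : 0 < K := by rw [hK]; positivity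
  refine ⟨C3 ^ ν * K, ?_⟩
  intro m hm u hu
  haveI : NeZero m := ⟨by omega⟩
  have hm2 : (2:ℝ) ≤ (m:ℝ) := by exact_mod_cast hm
  have hlogm2 : Real.log 2 ≤ Real.log m := Real.log_le_log (by norm_num) hm2
  have hlogm : 0 < Real.log m := lt_of_lt_of_le hlog2 hlogm2
  have hdenom : 0 < ν + Real.log m := by linarith
  obtain ⟨s, hs_def⟩ : ∃ x : ℝ, x = ν / (ν + Real.log m) := ⟨_, rfl⟩
  have hs0 : 0 < s := hs_def ▸ div_pos hν0 hdenom
  have hs1 : s < 1 := hs_def ▸ (div_lt_one hdenom).mpr (by linarith)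
  have hνs : ν / s = ν + Real.log m := by
    rw [hs_def]; field_simp
  have hslog : s * Real.log m ≤ ν := by
    rw [hs_def, div_mul_eq_mul_div, div_le_iff₀ hdenom]
    nlinarith
  -- Gamma quantities
  have hBpos : 0 < Real.Gamma (((m:ℝ) - s)/2) := Real.Gamma_pos_of_pos (by linarith)
  have hApos : 0 < Real.Gamma ((m:ℝ)/2) := Real.Gamma_pos_of_pos (by linarith)
  have hCpos : 0 < Real.Gamma ((-s+1)/2) := Real.Gamma_pos_of_pos (by linarith)
  -- J1 and J2
  have hJ1 := J1_eq (m := m) hm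
  rw [show (((m:ℝ) - 1) + 1) = (m:ℝ) by ring] at hJ1
  have hJ2 := J2_eq (m := m) hm hs1
  rw [show (((m:ℝ) - 1 - s) + 1) = (m:ℝ) - s by ring] at hJ2
  have hp1 : (0:ℝ) < π ^ (-(m:ℝ)/2) := Real.rpow_pos_of_pos pi_pos _
  have hp2 : (0:ℝ) < π ^ (-((m:ℝ) - s)/2) := Real.rpow_pos_of_pos pi_pos _
  have hp3 : (0:ℝ) < π ^ (-(-s+1)/2) := Real.rpow_pos_of_pos pi_pos _
  have hJ1pos : 0 < ∫ r in Ioi (0:ℝ), r ^ (m - 1) * exp (-π * r ^ 2) := by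
    rw [hJ1]; positivity
  have hJ2pos : 0 < ∫ r in Ioi (0:ℝ), r ^ (m - 1) * (r ^ (-s) * exp (-π * r ^ 2)) := by
    rw [hJ2]; positivity
  -- normalization
  have htRe : ((volume : Measure (EuclideanSpace ℝ (Fin m))).toSphere Set.univ).toReal
      = (∫ r in Ioi (0:ℝ), r ^ (m - 1) * exp (-π * r ^ 2))⁻¹ :=
    eq_inv_of_mul_eq_one_left (toSphere_identity hm)
  have hT0 : ((volume : Measure (EuclideanSpace ℝ (Fin m))).toSphere Set.univ) ≠ 0 := by
    intro h
    rw [h, ENNReal.toReal_zero] at htRe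
    exact absurd htRe.symm (ne_of_gt (inv_pos.mpr hJ1pos))
  have hinv : (((volume : Measure (EuclideanSpace ℝ (Fin m))).toSphere Set.univ)⁻¹).toReal
      = ∫ r in Ioi (0:ℝ), r ^ (m - 1) * exp (-π * r ^ 2) := by
    rw [ENNReal.toReal_inv, htRe, inv_inv]
  -- sphere integral of the dominating function
  have hSI := sphere_identity hm u hu hs0 hs1
  have hS : (∫ a : sphere (0 : EuclideanSpace ℝ (Fin m)) 1,
        |(inner ℝ ((a : EuclideanSpace ℝ (Fin m))) u : ℝ)| ^ (-s)
        ∂(volume : Measure (EuclideanSpace ℝ (Fin m))).toSphere)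
      = (π ^ (-(-s+1)/2) * Real.Gamma ((-s+1)/2))
        / ∫ r in Ioi (0:ℝ), r ^ (m - 1) * (r ^ (-s) * exp (-π * r ^ 2)) := by
    rw [eq_div_iff hJ2pos.ne']
    exact hSI
  have hf2P : Integrable (fun a : sphere (0 : EuclideanSpace ℝ (Fin m)) 1 =>
      |(inner ℝ ((a : EuclideanSpace ℝ (Fin m))) u : ℝ)| ^ (-s))
      (((volume : Measure (EuclideanSpace ℝ (Fin m))).toSphere Set.univ)⁻¹ •
        (volume : Measure (EuclideanSpace ℝ (Fin m))).toSphere) :=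
    (f2_integrable hm u hu hs0 hs1).smul_measure (ENNReal.inv_ne_top.mpr hT0)
  have hIntP : ∫ a : sphere (0 : EuclideanSpace ℝ (Fin m)) 1,
        |(inner ℝ ((a : EuclideanSpace ℝ (Fin m))) u : ℝ)| ^ (-s)
        ∂(((volume : Measure (EuclideanSpace ℝ (Fin m))).toSphere Set.univ)⁻¹ •
          (volume : Measure (EuclideanSpace ℝ (Fin m))).toSphere)
      = (∫ r in Ioi (0:ℝ), r ^ (m - 1) * exp (-π * r ^ 2))
        * ((π ^ (-(-s+1)/2) * Real.Gamma ((-s+1)/2))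
          / ∫ r in Ioi (0:ℝ), r ^ (m - 1) * (r ^ (-s) * exp (-π * r ^ 2))) := by
    rw [integral_smul_measure, smul_eq_mul, hinv, hS]
  -- bound the value
  have hAB : Real.Gamma ((m:ℝ)/2)
      ≤ Real.Gamma (((m:ℝ) - s)/2) * Real.exp (ν/2) := by
    have hx : 0 < ((m:ℝ) - s)/2 := by linarith
    have h := Gamma_ratio hx hs0 hs1
    rw [show ((m:ℝ) - s)/2 + s/2 = (m:ℝ)/2 by ring] at h
    refine h.trans ?_
    have hm0 : (0:ℝ) < m := by linarith
    have h1 : (((m:ℝ) - s)/2) ^ (s/2) ≤ (m:ℝ) ^ (s/2) :=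
      Real.rpow_le_rpow hx.le (by linarith) (by linarith)
    have h2 : (m:ℝ) ^ (s/2) ≤ Real.exp (ν/2) := by
      rw [Real.rpow_def_of_pos hm0]
      refine Real.exp_le_exp.mpr ?_
      nlinarith
    have := h1.trans h2
    exact mul_le_mul_of_nonneg_left this hBpos.le
  have hCb : Real.Gamma ((-s+1)/2) ≤ 2 * C3 := by
    have hy : 0 < (-s+1)/2 := by linarith
    have h1 : Real.Gamma ((-s+1)/2 + 1) ≤ 1 := Gamma_le_one (by linarith) (by linarith)
    have h2 : Real.Gamma ((-s+1)/2) = Real.Gamma ((-s+1)/2 + 1) / ((-s+1)/2) := by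
      rw [Real.Gamma_add_one hy.ne', mul_div_cancel_left₀ _ hy.ne']
    have h3 : Real.Gamma ((-s+1)/2) ≤ 1 / ((-s+1)/2) := by
      rw [h2]
      gcongr
    refine h3.trans ?_
    have hinv1s : (1 - s)⁻¹ = 1 + ν / Real.log m := by
      rw [hs_def]
      field_simp
      field_simp [hlogm.ne']
      ring
    have h4 : 1 / ((-s+1)/2) = 2 * (1 - s)⁻¹ := by
      rw [show (-s+1) = 1-s by ring, one_div_div, div_eq_mul_inv]
    rw [h4, hinv1s, hC3]
    have h5 : ν / Real.log m ≤ ν / Real.log 2 :=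
      div_le_div_of_nonneg_left hν0.le hlog2 hlogm2
    linarith
  have hval : (∫ r in Ioi (0:ℝ), r ^ (m - 1) * exp (-π * r ^ 2))
        * ((π ^ (-(-s+1)/2) * Real.Gamma ((-s+1)/2))
          / ∫ r in Ioi (0:ℝ), r ^ (m - 1) * (r ^ (-s) * exp (-π * r ^ 2)))
      ≤ K := by
    rw [hJ1, hJ2]
    have heq : (π ^ (-(m:ℝ)/2) * (1/2) * Real.Gamma ((m:ℝ)/2))
        * ((π ^ (-(-s+1)/2) * Real.Gamma ((-s+1)/2))
          / (π ^ (-((m:ℝ) - s)/2) * (1/2) * Real.Gamma (((m:ℝ) - s)/2)))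
      = (π ^ (-(m:ℝ)/2) * π ^ (-(-s+1)/2) / π ^ (-((m:ℝ) - s)/2))
        * (Real.Gamma ((m:ℝ)/2) * Real.Gamma ((-s+1)/2) / Real.Gamma (((m:ℝ) - s)/2)) :=
      alg1 hp2.ne' hBpos.ne'
    rw [heq]
    have hπ : π ^ (-(m:ℝ)/2) * π ^ (-(-s+1)/2) / π ^ (-((m:ℝ) - s)/2)
        = π ^ (-(1:ℝ)/2) := by
      rw [← Real.rpow_add pi_pos, ← Real.rpow_sub pi_pos]
      congr 1
      ring
    rw [hπ]
    have hπ1 : π ^ (-(1:ℝ)/2) ≤ 1 :=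
      Real.rpow_le_one_of_one_le_of_nonpos (by linarith [Real.pi_gt_three]) (by norm_num)
    have hG : Real.Gamma ((m:ℝ)/2) * Real.Gamma ((-s+1)/2) / Real.Gamma (((m:ℝ) - s)/2)
        ≤ Real.exp (ν/2) * (2 * C3) := by
      rw [div_le_iff₀ hBpos]
      calc Real.Gamma ((m:ℝ)/2) * Real.Gamma ((-s+1)/2)
          ≤ (Real.Gamma (((m:ℝ) - s)/2) * Real.exp (ν/2)) * (2 * C3) :=
            mul_le_mul hAB hCb hCpos.le (by positivity)
        _ = Real.exp (ν/2) * (2 * C3) * Real.Gamma (((m:ℝ) - s)/2) := by ring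
    calc π ^ (-(1:ℝ)/2) * (Real.Gamma ((m:ℝ)/2) * Real.Gamma ((-s+1)/2)
          / Real.Gamma (((m:ℝ) - s)/2))
        ≤ 1 * (Real.exp (ν/2) * (2 * C3)) := by
          refine mul_le_mul hπ1 hG (by positivity) (by norm_num)
      _ = K := by rw [hK, one_mul]
  -- final chain
  calc ∫ a : sphere (0 : EuclideanSpace ℝ (Fin m)) 1,
        abs (Real.log (abs (inner ℝ ((a : EuclideanSpace ℝ (Fin m))) u : ℝ))) ^ ν
        ∂(((volume : Measure (EuclideanSpace ℝ (Fin m))).toSphere Set.univ)⁻¹ •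
          (volume : Measure (EuclideanSpace ℝ (Fin m))).toSphere)
      ≤ ∫ a : sphere (0 : EuclideanSpace ℝ (Fin m)) 1,
          (ν/s) ^ ν * |(inner ℝ ((a : EuclideanSpace ℝ (Fin m))) u : ℝ)| ^ (-s)
          ∂(((volume : Measure (EuclideanSpace ℝ (Fin m))).toSphere Set.univ)⁻¹ •
            (volume : Measure (EuclideanSpace ℝ (Fin m))).toSphere) := by
        refine integral_mono_of_nonneg (Filter.Eventually.of_forall fun a => by positivity)
          (hf2P.const_mul _) (Filter.Eventually.of_forall fun a => ?_)
        have hCS : |(inner ℝ ((a : EuclideanSpace ℝ (Fin m))) u : ℝ)| ≤ 1 := by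
          have h := abs_real_inner_le_norm ((a : EuclideanSpace ℝ (Fin m))) u
          rwa [mem_sphere_zero_iff_norm.mp a.2, hu, one_mul] at h
        exact pointwise_bound hν hs0 (abs_nonneg _) hCS
    _ = (ν/s) ^ ν * ((∫ r in Ioi (0:ℝ), r ^ (m - 1) * exp (-π * r ^ 2))
          * ((π ^ (-(-s+1)/2) * Real.Gamma ((-s+1)/2))
            / ∫ r in Ioi (0:ℝ), r ^ (m - 1) * (r ^ (-s) * exp (-π * r ^ 2)))) := by
        rw [integral_const_mul, hIntP]
    _ ≤ (ν/s) ^ ν * K :=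
        mul_le_mul_of_nonneg_left hval (Real.rpow_nonneg (by positivity) _)
    _ ≤ (C3 ^ ν * (Real.log m) ^ ν) * K := by
        refine mul_le_mul_of_nonneg_right ?_ hKpos.le
        have h6 : ν / s ≤ C3 * Real.log m := by
          rw [hνs, hC3]
          have h7 : ν ≤ ν / Real.log 2 * Real.log m := by
            rw [div_mul_eq_mul_div, le_div_iff₀ hlog2]
            nlinarith
          nlinarith
        calc (ν/s) ^ ν ≤ (C3 * Real.log m) ^ ν :=
              Real.rpow_le_rpow (by positivity) h6 hν0.le
          _ = C3 ^ ν * (Real.log m) ^ ν := Real.mul_rpow hC3pos.le hlogm.le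
    _ = C3 ^ ν * K * (Real.log m) ^ ν := by ring
end

section
/- Let σ' be the standard real Gaussian measure on ℝ^k ⊂ ℂ^k with density π^{-k/2} e^{-‖a‖²} dλ_k. Then for every ν ≥ 1 there exists Γ_ν independent of k such that for every unit vector u ∈ ℂ^k, ∫_{ℝ^k} |log |⟨a,u⟩||^ν dσ'(a) ≤ Γ_ν. -/
open MeasureTheory Real

noncomputable def dens1 (t : ℝ) : ℝ := π ^ (-(1:ℝ)/2) * Real.exp (-t ^ 2)

lemma dens1_nonneg (t : ℝ) : 0 ≤ dens1 t :=
  mul_nonneg (Real.rpow_nonneg pi_pos.le _) (Real.exp_nonneg _)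

lemma integrable_exp_neg_sq' : Integrable (fun t : ℝ => Real.exp (-t ^ 2)) := by
  simpa using integrable_exp_neg_mul_sq (one_pos)

lemma integrable_dens1 : Integrable dens1 := by
  exact integrable_exp_neg_sq'.const_mul (π ^ (-(1:ℝ)/2))

lemma integral_dens1 : ∫ t, dens1 t = 1 := by
  have h := integral_gaussian 1
  simp only [neg_mul, one_mul, div_one] at h
  simp only [dens1, integral_const_mul, h]
  rw [Real.sqrt_eq_rpow, ← Real.rpow_add pi_pos]
  norm_num

lemma integrable_abs_rpow_mul_dens1 {s : ℝ} (hs : -1 < s) :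
    Integrable (fun t : ℝ => |t| ^ s * dens1 t) := by
  have h1 : Integrable (fun x : ℝ => x ^ s * Real.exp (-1 * x ^ 2)) :=
    integrable_rpow_mul_exp_neg_mul_sq one_pos hs
  have h2 : Integrable (fun x : ℝ => (-x) ^ s * Real.exp (-1 * x ^ 2)) := by
    have := ((Measure.measurePreserving_neg (volume : Measure ℝ)).integrable_comp_emb
      (Homeomorph.neg ℝ).measurableEmbedding
      (g := fun x : ℝ => x ^ s * Real.exp (-1 * x ^ 2))).mpr h1
    simpa [Function.comp_def, neg_sq] using this
  have h3 : Integrable (fun x : ℝ => |x| ^ s * Real.exp (-x ^ 2)) := by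
    apply Integrable.mono' (h1.norm.add h2.norm)
    · apply Measurable.aestronglyMeasurable
      exact (measurable_abs.pow measurable_const).mul
        ((measurable_id'.pow measurable_const).neg.exp)
    · filter_upwards with x
      simp only [Pi.add_apply, neg_one_mul]
      have hx : ‖|x| ^ s * Real.exp (-x ^ 2)‖ = |x| ^ s * Real.exp (-x ^ 2) := by
        rw [Real.norm_eq_abs, abs_of_nonneg]
        exact mul_nonneg (Real.rpow_nonneg (abs_nonneg _) _) (Real.exp_nonneg _)
      rw [hx]
      rcases le_total 0 x with hx0 | hx0
      · rw [abs_of_nonneg hx0]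
        have h4 : x ^ s * Real.exp (-x ^ 2) ≤ ‖x ^ s * Real.exp (-x ^ 2)‖ := le_abs_self _
        nlinarith [norm_nonneg ((-x) ^ s * Real.exp (-x ^ 2))]
      · rw [abs_of_nonpos hx0]
        have h4 : (-x) ^ s * Real.exp (-x ^ 2) ≤ ‖(-x) ^ s * Real.exp (-x ^ 2)‖ := le_abs_self _
        nlinarith [norm_nonneg (x ^ s * Real.exp (-x ^ 2))]
  have h5 := h3.const_mul (π ^ (-(1:ℝ)/2))
  apply h5.congr
  filter_upwards with x
  simp only [dens1]
  ring

lemma integrable_abs_mul_dens1 : Integrable (fun t : ℝ => |t| * dens1 t) := by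
  have := integrable_abs_rpow_mul_dens1 (s := 1) (by norm_num)
  simpa using this

lemma log_helper {s r : ℝ} (hr : 0 < r) (hs : 0 < s) : Real.log s ≤ s ^ r / r := by
  have h := Real.log_le_sub_one_of_pos (Real.rpow_pos_of_pos hs r)
  rw [Real.log_rpow hs] at h
  rw [le_div_iff₀ hr]
  nlinarith

lemma log_abs_rpow_le {ν : ℝ} (hν : 1 ≤ ν) {t : ℝ} (ht : 0 ≤ t) :
    |Real.log t| ^ ν ≤ ν ^ ν * t + (4*ν) ^ ν * t ^ (-(1:ℝ)/4) := by
  have hν0 : 0 < ν := lt_of_lt_of_le one_pos hν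
  have h4ν : 0 < 4*ν := by linarith
  rcases ht.eq_or_lt with h0 | ht0
  · rw [← h0, Real.log_zero, abs_zero, Real.zero_rpow hν0.ne',
      Real.zero_rpow (by norm_num : (-(1:ℝ)/4) ≠ 0)]
    norm_num
  rcases le_total 1 t with h1 | h1
  · have hlog : 0 ≤ Real.log t := Real.log_nonneg h1
    rw [abs_of_nonneg hlog]
    have key : Real.log t ≤ ν * t ^ (1/ν) := by
      have h := log_helper (show 0 < 1/ν by positivity) ht0
      calc Real.log t ≤ t ^ (1/ν) / (1/ν) := h
        _ = ν * t ^ (1/ν) := by field_simp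
    have k1 : Real.log t ^ ν ≤ (ν * t ^ (1/ν)) ^ ν :=
      Real.rpow_le_rpow hlog key hν0.le
    have k2 : (ν * t ^ (1/ν)) ^ ν = ν ^ ν * t := by
      rw [Real.mul_rpow hν0.le (Real.rpow_nonneg ht0.le _), ← Real.rpow_mul ht0.le,
        one_div_mul_cancel hν0.ne', Real.rpow_one]
    have pos2 : 0 ≤ (4*ν) ^ ν * t ^ (-(1:ℝ)/4) :=
      mul_nonneg (Real.rpow_nonneg h4ν.le _) (Real.rpow_nonneg ht0.le _)
    rw [k2] at k1
    linarith
  · have hlog : Real.log t ≤ 0 := Real.log_nonpos ht0.le h1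
    rw [abs_of_nonpos hlog]
    have hti0 : 0 < t⁻¹ := inv_pos.mpr ht0
    have key : -Real.log t ≤ (4*ν) * (t⁻¹) ^ (1/(4*ν)) := by
      rw [← Real.log_inv]
      have h := log_helper (show 0 < 1/(4*ν) by positivity) hti0
      calc Real.log t⁻¹ ≤ (t⁻¹) ^ (1/(4*ν)) / (1/(4*ν)) := h
        _ = (4*ν) * (t⁻¹) ^ (1/(4*ν)) := by field_simp
    have k1 : (-Real.log t) ^ ν ≤ ((4*ν) * (t⁻¹) ^ (1/(4*ν))) ^ ν :=
      Real.rpow_le_rpow (neg_nonneg.mpr hlog) key hν0.le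
    have k2 : ((4*ν) * (t⁻¹) ^ (1/(4*ν))) ^ ν = (4*ν) ^ ν * t ^ (-(1:ℝ)/4) := by
      rw [Real.mul_rpow h4ν.le (Real.rpow_nonneg hti0.le _), ← Real.rpow_mul hti0.le,
        show 1/(4*ν)*ν = 1/4 by field_simp,
        Real.inv_rpow ht0.le, ← Real.rpow_neg ht0.le]
      norm_num
    have pos1 : 0 ≤ ν ^ ν * t := mul_nonneg (Real.rpow_nonneg hν0.le _) ht0.le
    rw [k2] at k1
    linarith

lemma prod_dens {k : ℕ} (a : Fin k → ℝ) :
    (π : ℝ) ^ (-(k:ℝ)/2) * Real.exp (-∑ j, (a j)^2) = ∏ j, dens1 (a j) := by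
  simp only [dens1, Finset.prod_mul_distrib, Finset.prod_const, Finset.card_univ,
    Fintype.card_fin]
  rw [← Real.exp_sum, ← Real.rpow_natCast (π ^ (-(1:ℝ)/2)) k, ← Real.rpow_mul pi_pos.le]
  congr 2
  · push_cast
    ring_nf
  · rw [← Finset.sum_neg_distrib]

lemma prod_dens_norm {k : ℕ} (a : EuclideanSpace ℝ (Fin k)) :
    ∏ j, dens1 (a j) = (π : ℝ) ^ (-(k:ℝ)/2) * Real.exp (-‖a‖^2) := by
  rw [← prod_dens]
  congr 3
  rw [EuclideanSpace.norm_eq, Real.sq_sqrt (by positivity)]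
  simp [Real.norm_eq_abs, sq_abs]

lemma reduce_unit {k : ℕ} (hk : 0 < k) (w : EuclideanSpace ℝ (Fin k)) (hw : ‖w‖ = 1)
    (φ : ℝ → ℝ) (hφ : Integrable (fun t => φ t * dens1 t)) :
    Integrable (fun a : EuclideanSpace ℝ (Fin k) => φ ((inner ℝ a w : ℝ)) * ∏ j, dens1 (a j)) ∧
      ∫ a : EuclideanSpace ℝ (Fin k), φ ((inner ℝ a w : ℝ)) * ∏ j, dens1 (a j)
        = ∫ t, φ t * dens1 t := by
  classical
  set i0 : Fin k := ⟨0, hk⟩ with hi0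
  set e0 : EuclideanSpace ℝ (Fin k) := EuclideanSpace.single i0 (1:ℝ) with he0def
  have he0 : ‖e0‖ = 1 := by simp [he0def]
  set R : EuclideanSpace ℝ (Fin k) ≃ₗᵢ[ℝ] EuclideanSpace ℝ (Fin k) :=
    Submodule.reflection (ℝ ∙ (w - e0))ᗮ with hRdef
  have hRw : R w = e0 := Submodule.reflection_sub (by rw [hw, he0])
  have hpt : ∀ b : EuclideanSpace ℝ (Fin k),
      φ ((inner ℝ (R b) w : ℝ)) * ∏ j, dens1 ((R b) j) = φ (b i0) * ∏ j, dens1 (b j) := by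
    intro b
    have h1 : (inner ℝ (R b) w : ℝ) = b i0 := by
      calc (inner ℝ (R b) w : ℝ) = (inner ℝ (R b) (R (R w)) : ℝ) := by
            rw [hRdef, Submodule.reflection_reflection]
        _ = (inner ℝ b (R w) : ℝ) := R.inner_map_map b (R w)
        _ = b i0 := by
            rw [hRw, he0def]
            simpa using EuclideanSpace.inner_single_right i0 (1:ℝ) b
    rw [h1, prod_dens_norm, prod_dens_norm, R.norm_map]
  have hR : MeasurePreserving R volume volume := R.measurePreserving
  have hRemb : MeasurableEmbedding (R : EuclideanSpace ℝ (Fin k) → EuclideanSpace ℝ (Fin k)) :=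
    R.toMeasurableEquiv.measurableEmbedding
  have he : MeasurePreserving ((MeasurableEquiv.toLp 2 (Fin k → ℝ)).symm) volume volume :=
    EuclideanSpace.volume_preserving_symm_measurableEquiv_toLp (Fin k)
  have hemb := ((MeasurableEquiv.toLp 2 (Fin k → ℝ)).symm).measurableEmbedding
  set f : Fin k → ℝ → ℝ := fun j => if j = i0 then (fun t => φ t * dens1 t) else dens1 with hfdef
  have hfprod : ∀ b : Fin k → ℝ, φ (b i0) * ∏ j, dens1 (b j) = ∏ j, f j (b j) := by
    intro b
    rw [← Finset.mul_prod_erase Finset.univ (fun j => dens1 (b j)) (Finset.mem_univ i0),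
        ← Finset.mul_prod_erase Finset.univ (fun j => f j (b j)) (Finset.mem_univ i0)]
    have h2 : ∀ j ∈ Finset.univ.erase i0, f j (b j) = dens1 (b j) := by
      intro j hj
      simp [hfdef, (Finset.mem_erase.mp hj).1]
    rw [Finset.prod_congr rfl h2]
    simp [hfdef]
    ring
  have hfint : ∀ j, Integrable (f j) := by
    intro j
    by_cases h : j = i0 <;> simp [hfdef, h, hφ, integrable_dens1]
  have hPiInt : Integrable (fun b : Fin k → ℝ => φ (b i0) * ∏ j, dens1 (b j)) := by
    exact (Integrable.fintype_prod hfint).congr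
      (Filter.Eventually.of_forall fun b => (hfprod b).symm)
  have hPiVal : ∫ b : Fin k → ℝ, φ (b i0) * ∏ j, dens1 (b j) = ∫ t, φ t * dens1 t := by
    rw [integral_congr_ae (Filter.Eventually.of_forall hfprod),
      MeasureTheory.integral_fintype_prod_volume_eq_prod f,
      ← Finset.mul_prod_erase Finset.univ (fun j => ∫ t, f j t) (Finset.mem_univ i0)]
    have h2 : ∀ j ∈ Finset.univ.erase i0, (∫ t, f j t) = 1 := by
      intro j hj
      simp [hfdef, (Finset.mem_erase.mp hj).1, integral_dens1]
    rw [Finset.prod_congr rfl h2, Finset.prod_const_one, mul_one]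
    simp [hfdef]
  have hEInt : Integrable
      (fun b : EuclideanSpace ℝ (Fin k) => φ (b i0) * ∏ j, dens1 (b j)) := by
    exact (he.integrable_comp_emb hemb
      (g := fun b : Fin k → ℝ => φ (b i0) * ∏ j, dens1 (b j))).mpr hPiInt
  have hEVal : ∫ b : EuclideanSpace ℝ (Fin k), φ (b i0) * ∏ j, dens1 (b j)
      = ∫ t, φ t * dens1 t := by
    rw [← hPiVal]
    exact he.integral_comp hemb (fun b : Fin k → ℝ => φ (b i0) * ∏ j, dens1 (b j))
  constructor
  · have h3 : Integrable ((fun a : EuclideanSpace ℝ (Fin k) =>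
        φ ((inner ℝ a w : ℝ)) * ∏ j, dens1 (a j)) ∘ R) :=
      hEInt.congr (Filter.Eventually.of_forall fun b => (hpt b).symm)
    exact (hR.integrable_comp_emb hRemb).mp h3
  · calc ∫ a : EuclideanSpace ℝ (Fin k), φ ((inner ℝ a w : ℝ)) * ∏ j, dens1 (a j)
        = ∫ b : EuclideanSpace ℝ (Fin k), φ ((inner ℝ (R b) w : ℝ)) * ∏ j, dens1 ((R b) j) :=
          (hR.integral_comp hRemb _).symm
      _ = ∫ b : EuclideanSpace ℝ (Fin k), φ (b i0) * ∏ j, dens1 (b j) :=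
          integral_congr_ae (Filter.Eventually.of_forall hpt)
      _ = ∫ t, φ t * dens1 t := hEVal

lemma reduce_gen {k : ℕ} (hk : 0 < k) (v : EuclideanSpace ℝ (Fin k)) (φ : ℝ → ℝ)
    (hφ : Integrable (fun t => φ (‖v‖ * t) * dens1 t)) :
    Integrable (fun a : EuclideanSpace ℝ (Fin k) => φ ((inner ℝ a v : ℝ)) * ∏ j, dens1 (a j)) ∧
      ∫ a : EuclideanSpace ℝ (Fin k), φ ((inner ℝ a v : ℝ)) * ∏ j, dens1 (a j)
        = ∫ t, φ (‖v‖ * t) * dens1 t := by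
  by_cases hv : v = 0
  · subst hv
    have h := reduce_unit hk (EuclideanSpace.single ⟨0, hk⟩ (1:ℝ)) (by simp)
      (fun _ => φ 0) (by simpa using hφ)
    constructor
    · exact h.1.congr (Filter.Eventually.of_forall fun a => by simp)
    · rw [integral_congr_ae (Filter.Eventually.of_forall fun a : EuclideanSpace ℝ (Fin k) => by
        rw [inner_zero_right])]
      rw [h.2]
      simp
  · have hnv : ‖v‖ ≠ 0 := norm_ne_zero_iff.mpr hv
    set w : EuclideanSpace ℝ (Fin k) := ‖v‖⁻¹ • v with hwdef
    have hw : ‖w‖ = 1 := norm_smul_inv_norm (𝕜 := ℝ) hv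
    have hvw : ∀ a : EuclideanSpace ℝ (Fin k), (inner ℝ a v : ℝ) = ‖v‖ * (inner ℝ a w : ℝ) := by
      intro a
      have h1 : (inner ℝ a v : ℝ) = (inner ℝ a (‖v‖ • w) : ℝ) := by
        rw [hwdef, smul_inv_smul₀ hnv]
      rw [h1, real_inner_smul_right]
    have h := reduce_unit hk w hw (fun t => φ (‖v‖ * t)) hφ
    constructor
    · exact h.1.congr (Filter.Eventually.of_forall fun a => by
        show φ (‖v‖ * (inner ℝ a w : ℝ)) * ∏ j, dens1 (a j)
          = φ ((inner ℝ a v : ℝ)) * ∏ j, dens1 (a j)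
        rw [hvw a])
    · rw [integral_congr_ae (Filter.Eventually.of_forall
        (fun a : EuclideanSpace ℝ (Fin k) => by
          show φ ((inner ℝ a v : ℝ)) * ∏ j, dens1 (a j)
            = φ (‖v‖ * (inner ℝ a w : ℝ)) * ∏ j, dens1 (a j)
          rw [hvw a]))]
      exact h.2

lemma reduce_abs {k : ℕ} (hk : 0 < k) (v : EuclideanSpace ℝ (Fin k)) :
    Integrable (fun a : EuclideanSpace ℝ (Fin k) => |(inner ℝ a v : ℝ)| * ∏ j, dens1 (a j)) ∧
      ∫ a : EuclideanSpace ℝ (Fin k), |(inner ℝ a v : ℝ)| * ∏ j, dens1 (a j)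
        = ‖v‖ * ∫ t, |t| * dens1 t := by
  have heq : (fun t : ℝ => |‖v‖ * t| * dens1 t) = fun t => ‖v‖ * (|t| * dens1 t) := by
    funext t
    rw [abs_mul, abs_of_nonneg (norm_nonneg v)]
    ring
  have h := reduce_gen hk v (fun t => |t|)
    (by rw [heq]; exact integrable_abs_mul_dens1.const_mul _)
  exact ⟨h.1, by rw [h.2, heq, integral_const_mul]⟩

lemma reduce_rpow {k : ℕ} (hk : 0 < k) (w : EuclideanSpace ℝ (Fin k)) (hw : ‖w‖ = 1) :
    Integrable (fun a : EuclideanSpace ℝ (Fin k) =>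
        |(inner ℝ a w : ℝ)| ^ (-(1:ℝ)/4) * ∏ j, dens1 (a j)) ∧
      ∫ a : EuclideanSpace ℝ (Fin k), |(inner ℝ a w : ℝ)| ^ (-(1:ℝ)/4) * ∏ j, dens1 (a j)
        = ∫ t, |t| ^ (-(1:ℝ)/4) * dens1 t := by
  have h := reduce_gen hk w (fun t => |t| ^ (-(1:ℝ)/4)) (by
    rw [hw]
    simpa using integrable_abs_rpow_mul_dens1 (s := -(1:ℝ)/4) (by norm_num))
  refine ⟨h.1, ?_⟩
  rw [h.2, hw]
  simp

set_option maxHeartbeats 2000000 in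
/-- Dimension-free log-moment bound for the real Gaussian: for every `ν ≥ 1` there is
`Γ_ν` such that for every `k` and every unit vector `u ∈ ℂ^k`,
`∫_{ℝ^k} |log |⟨a,u⟩||^ν dσ'_k(a) ≤ Γ_ν`, where `σ'_k` has density `π^{-k/2} e^{-‖a‖²}`. -/
theorem stmt11 (ν : ℝ) (hν : 1 ≤ ν) :
    ∃ Γ : ℝ, ∀ (k : ℕ) (u : Fin k → ℂ), (∑ j, ‖u j‖ ^ 2) = 1 →
      ∫ a : Fin k → ℝ,
          |Real.log ‖∑ j, (a j : ℂ) * (starRingEnd ℂ) (u j)‖| ^ ν *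
            (π ^ (-(k : ℝ) / 2) * Real.exp (-∑ j, (a j) ^ 2)) ≤ Γ := by
  have hν0 : 0 < ν := lt_of_lt_of_le one_pos hν
  have h4ν0 : 0 < 4*ν := by linarith
  set c1 : ℝ := ν ^ ν with hc1def
  set c2 : ℝ := 2 * (4*ν) ^ ν with hc2def
  have hc1n : 0 ≤ c1 := Real.rpow_nonneg hν0.le _
  have h4n : 0 ≤ (4*ν) ^ ν := Real.rpow_nonneg h4ν0.le _
  have hc2n : 0 ≤ c2 := by positivity
  set I1 : ℝ := ∫ t, |t| * dens1 t with hI1def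
  set I2 : ℝ := ∫ t, |t| ^ (-(1:ℝ)/4) * dens1 t with hI2def
  have hI1n : 0 ≤ I1 :=
    integral_nonneg fun t => mul_nonneg (abs_nonneg _) (dens1_nonneg _)
  refine ⟨c1 * (2 * I1) + c2 * I2, ?_⟩
  intro k u hu
  rcases Nat.eq_zero_or_pos k with rfl | hk
  · simp at hu
  -- real and imaginary parts of u as Euclidean vectors
  set X : EuclideanSpace ℝ (Fin k) :=
    (WithLp.equiv 2 (Fin k → ℝ)).symm (fun j => (u j).re) with hXdef
  set Y : EuclideanSpace ℝ (Fin k) :=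
    (WithLp.equiv 2 (Fin k → ℝ)).symm (fun j => (u j).im) with hYdef
  have hXj : ∀ j, X j = (u j).re := fun j => rfl
  have hYj : ∀ j, Y j = (u j).im := fun j => rfl
  have hXn : ‖X‖^2 = ∑ j, (u j).re^2 := by
    rw [EuclideanSpace.norm_eq, Real.sq_sqrt (by positivity)]
    exact Finset.sum_congr rfl fun j _ => by rw [hXj, Real.norm_eq_abs, sq_abs]
  have hYn : ‖Y‖^2 = ∑ j, (u j).im^2 := by
    rw [EuclideanSpace.norm_eq, Real.sq_sqrt (by positivity)]
    exact Finset.sum_congr rfl fun j _ => by rw [hYj, Real.norm_eq_abs, sq_abs]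
  have hsum : ‖X‖^2 + ‖Y‖^2 = 1 := by
    rw [hXn, hYn, ← Finset.sum_add_distrib, ← hu]
    refine Finset.sum_congr rfl fun j _ => ?_
    rw [Complex.sq_norm, Complex.normSq_apply]
    ring
  have hX1 : ‖X‖ ≤ 1 := by nlinarith [norm_nonneg X, norm_nonneg Y, sq_nonneg ‖Y‖]
  have hY1 : ‖Y‖ ≤ 1 := by nlinarith [norm_nonneg X, norm_nonneg Y, sq_nonneg ‖X‖]
  -- the function Z
  set Z : EuclideanSpace ℝ (Fin k) → ℝ :=
    fun a => ‖∑ j, ((a j : ℝ) : ℂ) * (starRingEnd ℂ) (u j)‖ with hZdef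
  have hZsqrt : ∀ a, Z a = Real.sqrt ((inner ℝ a X : ℝ)^2 + (inner ℝ a Y : ℝ)^2) := by
    intro a
    have hre : (∑ j, ((a j : ℝ) : ℂ) * (starRingEnd ℂ) (u j)).re = (inner ℝ a X : ℝ) := by
      rw [Complex.re_sum, PiLp.inner_apply]
      refine Finset.sum_congr rfl fun j _ => ?_
      simp [Complex.mul_re, hXj, RCLike.inner_apply, conj_trivial, mul_comm]
    have him : (∑ j, ((a j : ℝ) : ℂ) * (starRingEnd ℂ) (u j)).im = -(inner ℝ a Y : ℝ) := by
      rw [Complex.im_sum, PiLp.inner_apply, ← Finset.sum_neg_distrib]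
      refine Finset.sum_congr rfl fun j _ => ?_
      simp [Complex.mul_im, hYj, RCLike.inner_apply, conj_trivial, mul_comm]
    rw [hZdef]
    simp only [Complex.norm_def, Complex.normSq_apply, hre, him]
    congr 1
    ring
  have hub : ∀ a, Z a ≤ |(inner ℝ a X : ℝ)| + |(inner ℝ a Y : ℝ)| := by
    intro a
    rw [hZsqrt a]
    have h1 : (inner ℝ a X : ℝ)^2 + (inner ℝ a Y : ℝ)^2
        ≤ (|(inner ℝ a X : ℝ)| + |(inner ℝ a Y : ℝ)|)^2 := by
      nlinarith [abs_nonneg (inner ℝ a X : ℝ), abs_nonneg (inner ℝ a Y : ℝ),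
        sq_abs (inner ℝ a X : ℝ), sq_abs (inner ℝ a Y : ℝ),
        mul_nonneg (abs_nonneg (inner ℝ a X : ℝ)) (abs_nonneg (inner ℝ a Y : ℝ))]
    calc Real.sqrt ((inner ℝ a X : ℝ)^2 + (inner ℝ a Y : ℝ)^2)
        ≤ Real.sqrt ((|(inner ℝ a X : ℝ)| + |(inner ℝ a Y : ℝ)|)^2) := Real.sqrt_le_sqrt h1
      _ = |(inner ℝ a X : ℝ)| + |(inner ℝ a Y : ℝ)| := Real.sqrt_sq (by positivity)
  have hlbX : ∀ a, |(inner ℝ a X : ℝ)| ≤ Z a := by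
    intro a
    rw [hZsqrt a, ← Real.sqrt_sq_eq_abs]
    exact Real.sqrt_le_sqrt (by nlinarith [sq_nonneg (inner ℝ a Y : ℝ)])
  have hlbY : ∀ a, |(inner ℝ a Y : ℝ)| ≤ Z a := by
    intro a
    rw [hZsqrt a, ← Real.sqrt_sq_eq_abs]
    exact Real.sqrt_le_sqrt (by nlinarith [sq_nonneg (inner ℝ a X : ℝ)])
  -- choose the large component V
  obtain ⟨V, hV2, hVZ, hV1⟩ : ∃ V : EuclideanSpace ℝ (Fin k),
      1/2 ≤ ‖V‖^2 ∧ (∀ a, |(inner ℝ a V : ℝ)| ≤ Z a) ∧ ‖V‖ ≤ 1 := by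
    rcases le_total (1/2 : ℝ) (‖X‖^2) with h | h
    · exact ⟨X, h, hlbX, hX1⟩
    · exact ⟨Y, by nlinarith, hlbY, hY1⟩
  have hVne : V ≠ 0 := by
    intro h
    rw [h] at hV2
    simp at hV2
    linarith
  have hVn0 : (0:ℝ) < ‖V‖ := norm_pos_iff.mpr hVne
  have hVhalf : (1/2 : ℝ) ≤ ‖V‖ := by nlinarith
  set w : EuclideanSpace ℝ (Fin k) := ‖V‖⁻¹ • V with hwdef
  have hw : ‖w‖ = 1 := norm_smul_inv_norm (𝕜 := ℝ) hVne
  have hVw : ∀ a : EuclideanSpace ℝ (Fin k), (inner ℝ a V : ℝ) = ‖V‖ * (inner ℝ a w : ℝ) := by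
    intro a
    have h1 : (inner ℝ a V : ℝ) = (inner ℝ a (‖V‖ • w) : ℝ) := by
      rw [hwdef, smul_inv_smul₀ hVn0.ne']
    rw [h1, real_inner_smul_right]
  -- null set where ⟪a,w⟫ = 0
  have hae : ∀ᵐ a : EuclideanSpace ℝ (Fin k) ∂volume, (inner ℝ a w : ℝ) ≠ 0 := by
    have hS : LinearMap.ker (innerSL ℝ w).toLinearMap ≠ ⊤ := by
      intro h
      have hmem : w ∈ LinearMap.ker (innerSL ℝ w).toLinearMap := h ▸ Submodule.mem_top
      rw [LinearMap.mem_ker] at hmem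
      have : (inner ℝ w w : ℝ) = 0 := hmem
      rw [real_inner_self_eq_norm_sq, hw] at this
      norm_num at this
    have h0 : volume ((LinearMap.ker (innerSL ℝ w).toLinearMap : Submodule ℝ (EuclideanSpace ℝ (Fin k)))
        : Set (EuclideanSpace ℝ (Fin k))) = 0 :=
      Measure.addHaar_submodule _ _ hS
    filter_upwards [measure_eq_zero_iff_ae_notMem.mp h0] with a ha
    intro hcon
    apply ha
    have : (inner ℝ w a : ℝ) = 0 := by rw [real_inner_comm]; exact hcon
    exact LinearMap.mem_ker.mpr this
  -- integrability and values of the three comparison integrals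
  have hIX := reduce_abs hk X
  have hIY := reduce_abs hk Y
  have hIw := reduce_rpow hk w hw
  -- transfer the integral to Euclidean space
  have htrans := (EuclideanSpace.volume_preserving_symm_measurableEquiv_toLp (Fin k)).integral_comp
    ((MeasurableEquiv.toLp 2 (Fin k → ℝ)).symm).measurableEmbedding
    (fun a : Fin k → ℝ =>
      |Real.log ‖∑ j, (a j : ℂ) * (starRingEnd ℂ) (u j)‖| ^ ν *
        (π ^ (-(k : ℝ) / 2) * Real.exp (-∑ j, (a j) ^ 2)))
  rw [← htrans]
  have hstep : ∀ a : EuclideanSpace ℝ (Fin k),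
      |Real.log ‖(∑ j, ((((MeasurableEquiv.toLp 2 (Fin k → ℝ)).symm) a) j : ℂ) *
          (starRingEnd ℂ) (u j))‖| ^ ν *
        (π ^ (-(k : ℝ) / 2) *
          Real.exp (-∑ j, ((((MeasurableEquiv.toLp 2 (Fin k → ℝ)).symm) a) j) ^ 2))
      = |Real.log (Z a)| ^ ν * ∏ j, dens1 (a j) := by
    intro a
    show |Real.log (Z a)| ^ ν * (π ^ (-(k : ℝ) / 2) * Real.exp (-∑ j, (a j) ^ 2)) = _
    rw [show π ^ (-(k : ℝ) / 2) * Real.exp (-∑ j, (a j) ^ 2) = ∏ j, dens1 (a j) from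
      prod_dens (fun j => a j)]
  calc ∫ a : EuclideanSpace ℝ (Fin k),
        |Real.log ‖(∑ j, ((((MeasurableEquiv.toLp 2 (Fin k → ℝ)).symm) a) j : ℂ) *
            (starRingEnd ℂ) (u j))‖| ^ ν *
          (π ^ (-(k : ℝ) / 2) *
            Real.exp (-∑ j, ((((MeasurableEquiv.toLp 2 (Fin k → ℝ)).symm) a) j) ^ 2))
      = ∫ a : EuclideanSpace ℝ (Fin k), |Real.log (Z a)| ^ ν * ∏ j, dens1 (a j) :=
        integral_congr_ae (Filter.Eventually.of_forall hstep)
    _ ≤ ∫ a : EuclideanSpace ℝ (Fin k),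
          (c1 * (|(inner ℝ a X : ℝ)| * ∏ j, dens1 (a j)) +
           c1 * (|(inner ℝ a Y : ℝ)| * ∏ j, dens1 (a j)) +
           c2 * (|(inner ℝ a w : ℝ)| ^ (-(1:ℝ)/4) * ∏ j, dens1 (a j))) := by
        apply integral_mono_of_nonneg
        · exact Filter.Eventually.of_forall fun a =>
            mul_nonneg (Real.rpow_nonneg (abs_nonneg _) _)
              (Finset.prod_nonneg fun j _ => dens1_nonneg _)
        · exact ((hIX.1.const_mul c1).add (hIY.1.const_mul c1)).add (hIw.1.const_mul c2)
        · filter_upwards [hae] with a haw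
          have hZ0 : 0 ≤ Z a := norm_nonneg _
          have hmain := log_abs_rpow_le hν hZ0
          have hP : 0 ≤ ∏ j, dens1 (a j) := Finset.prod_nonneg fun j _ => dens1_nonneg _
          have habs : 0 < |(inner ℝ a w : ℝ)| := abs_pos.mpr haw
          have hwr : 0 ≤ |(inner ℝ a w : ℝ)| ^ (-(1:ℝ)/4) :=
            Real.rpow_nonneg (abs_nonneg _) _
          have h3 : (Z a) ^ (-(1:ℝ)/4) ≤ 2 * |(inner ℝ a w : ℝ)| ^ (-(1:ℝ)/4) := by
            have hlb : ‖V‖ * |(inner ℝ a w : ℝ)| ≤ Z a := by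
              have h := hVZ a
              rw [hVw a, abs_mul, abs_of_nonneg hVn0.le] at h
              exact h
            have h4 : (Z a) ^ (-(1:ℝ)/4) ≤ (‖V‖ * |(inner ℝ a w : ℝ)|) ^ (-(1:ℝ)/4) :=
              Real.rpow_le_rpow_of_nonpos (by positivity) hlb (by norm_num)
            have h5 : (‖V‖ * |(inner ℝ a w : ℝ)|) ^ (-(1:ℝ)/4)
                = ‖V‖ ^ (-(1:ℝ)/4) * |(inner ℝ a w : ℝ)| ^ (-(1:ℝ)/4) :=
              Real.mul_rpow hVn0.le habs.le
            have h7 : ‖V‖ ^ (-(1:ℝ)/4) ≤ (1/2 : ℝ) ^ (-(1:ℝ)/4) :=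
              Real.rpow_le_rpow_of_nonpos (by norm_num) hVhalf (by norm_num)
            have h8 : ((1:ℝ)/2) ^ (-(1:ℝ)/4) = (2:ℝ) ^ ((1:ℝ)/4) := by
              rw [show ((1:ℝ)/2) = (2:ℝ)⁻¹ by norm_num,
                Real.inv_rpow (by norm_num), ← Real.rpow_neg (by norm_num)]
              norm_num
            have h9 : (2:ℝ) ^ ((1:ℝ)/4) ≤ 2 := by
              calc (2:ℝ) ^ ((1:ℝ)/4) ≤ 2 ^ (1:ℝ) :=
                    Real.rpow_le_rpow_of_exponent_le one_le_two (by norm_num)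
                _ = 2 := Real.rpow_one 2
            rw [h8] at h7
            have h6 : ‖V‖ ^ (-(1:ℝ)/4) ≤ 2 := le_trans h7 h9
            calc (Z a) ^ (-(1:ℝ)/4) ≤ ‖V‖ ^ (-(1:ℝ)/4) * |(inner ℝ a w : ℝ)| ^ (-(1:ℝ)/4) := by
                  rw [← h5]; exact h4
              _ ≤ 2 * |(inner ℝ a w : ℝ)| ^ (-(1:ℝ)/4) :=
                  mul_le_mul_of_nonneg_right h6 hwr
          have hZub := hub a
          have hkey : |Real.log (Z a)| ^ ν
              ≤ c1 * (|(inner ℝ a X : ℝ)| + |(inner ℝ a Y : ℝ)|) +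
                c2 * |(inner ℝ a w : ℝ)| ^ (-(1:ℝ)/4) := by
            have t1 : ν ^ ν * Z a ≤ c1 * (|(inner ℝ a X : ℝ)| + |(inner ℝ a Y : ℝ)|) := by
              rw [hc1def]
              exact mul_le_mul_of_nonneg_left hZub hc1n
            have t2 : (4*ν) ^ ν * (Z a) ^ (-(1:ℝ)/4)
                ≤ c2 * |(inner ℝ a w : ℝ)| ^ (-(1:ℝ)/4) := by
              rw [hc2def]
              calc (4*ν) ^ ν * (Z a) ^ (-(1:ℝ)/4)
                  ≤ (4*ν) ^ ν * (2 * |(inner ℝ a w : ℝ)| ^ (-(1:ℝ)/4)) :=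
                    mul_le_mul_of_nonneg_left h3 h4n
                _ = 2 * (4*ν) ^ ν * |(inner ℝ a w : ℝ)| ^ (-(1:ℝ)/4) := by ring
            linarith [hmain]
          calc |Real.log (Z a)| ^ ν * ∏ j, dens1 (a j)
              ≤ (c1 * (|(inner ℝ a X : ℝ)| + |(inner ℝ a Y : ℝ)|) +
                  c2 * |(inner ℝ a w : ℝ)| ^ (-(1:ℝ)/4)) * ∏ j, dens1 (a j) :=
                mul_le_mul_of_nonneg_right hkey hP
            _ = c1 * (|(inner ℝ a X : ℝ)| * ∏ j, dens1 (a j)) +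
                c1 * (|(inner ℝ a Y : ℝ)| * ∏ j, dens1 (a j)) +
                c2 * (|(inner ℝ a w : ℝ)| ^ (-(1:ℝ)/4) * ∏ j, dens1 (a j)) := by ring
    _ = c1 * (‖X‖ * I1) + c1 * (‖Y‖ * I1) + c2 * I2 := by
        have g1 : Integrable (fun a : EuclideanSpace ℝ (Fin k) =>
            c1 * (|(inner ℝ a X : ℝ)| * ∏ j, dens1 (a j))) volume := hIX.1.const_mul c1
        have g2 : Integrable (fun a : EuclideanSpace ℝ (Fin k) =>
            c1 * (|(inner ℝ a Y : ℝ)| * ∏ j, dens1 (a j))) volume := hIY.1.const_mul c1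
        have g3 : Integrable (fun a : EuclideanSpace ℝ (Fin k) =>
            c2 * (|(inner ℝ a w : ℝ)| ^ (-(1:ℝ)/4) * ∏ j, dens1 (a j))) volume :=
          hIw.1.const_mul c2
        have g12 : Integrable (fun a : EuclideanSpace ℝ (Fin k) =>
            c1 * (|(inner ℝ a X : ℝ)| * ∏ j, dens1 (a j)) +
              c1 * (|(inner ℝ a Y : ℝ)| * ∏ j, dens1 (a j))) volume := g1.add g2
        rw [integral_add g12 g3, integral_add g1 g2,
          integral_const_mul, integral_const_mul, integral_const_mul,
          hIX.2, hIY.2, hIw.2]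
    _ ≤ c1 * (2 * I1) + c2 * I2 := by
        have e1 : c1 * (‖X‖ * I1) ≤ c1 * I1 :=
          mul_le_mul_of_nonneg_left (by nlinarith) hc1n
        have e2 : c1 * (‖Y‖ * I1) ≤ c1 * I1 :=
          mul_le_mul_of_nonneg_left (by nlinarith) hc1n
        linarith
end

section
/- Let g: [-1,1] → [0,∞), g(t) = c_m (1−t²)^{(m-3)/2} with m ≥ 3 and c_m chosen so ∫_{-1}^1 g = 1. Then for every ν ≥ 1 there is M_ν independent of m such that ∫_{-1}^1 |log|t||^ν g(t) dt ≤ M_ν (log m)^ν. -/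
open MeasureTheory Real intervalIntegral

section aux16

lemma aux16_gamma_half_le {x : ℝ} (hx : 0 < x) :
    Real.Gamma (x + 1/2) ≤ Real.sqrt x * Real.Gamma x := by
  have hGx : 0 < Real.Gamma x := Real.Gamma_pos_of_pos hx
  have hGx1 : 0 < Real.Gamma (x + 1) := Real.Gamma_pos_of_pos (by linarith)
  have hGm : 0 < Real.Gamma (x + 1/2) := Real.Gamma_pos_of_pos (by linarith)
  have key := Real.convexOn_log_Gamma.2 (Set.mem_Ioi.2 hx) (Set.mem_Ioi.2 (by linarith : (0:ℝ) < x + 1))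
    (by norm_num : (0:ℝ) ≤ 1/2) (by norm_num : (0:ℝ) ≤ 1/2) (by norm_num)
  simp only [smul_eq_mul, Function.comp_apply] at key
  rw [show (1/2 : ℝ) * x + 1/2 * (x+1) = x + 1/2 by ring] at key
  have hsq : Real.Gamma (x + 1/2) ^ 2 ≤ x * Real.Gamma x ^ 2 := by
    have h2 : 2 * Real.log (Real.Gamma (x + 1/2)) ≤ Real.log (x * Real.Gamma x ^ 2) := by
      rw [Real.Gamma_add_one (ne_of_gt hx), Real.log_mul (ne_of_gt hx) (ne_of_gt hGx)] at key
      rw [show x * Real.Gamma x ^ 2 = Real.Gamma x * (x * Real.Gamma x) by ring,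
        Real.log_mul (ne_of_gt hGx) (by positivity), Real.log_mul (ne_of_gt hx) (ne_of_gt hGx)]
      linarith
    have := Real.exp_le_exp.mpr h2
    rwa [Real.exp_log (by positivity : (0:ℝ) < x * Real.Gamma x ^ 2), mul_comm,
      Real.exp_mul, Real.exp_log hGm, Real.rpow_two] at this
  calc Real.Gamma (x + 1/2) = Real.sqrt (Real.Gamma (x + 1/2) ^ 2) := (Real.sqrt_sq hGm.le).symm
    _ ≤ Real.sqrt (x * Real.Gamma x ^ 2) := Real.sqrt_le_sqrt hsq
    _ = Real.sqrt x * Real.Gamma x := by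
        rw [Real.sqrt_mul hx.le, Real.sqrt_sq hGx.le]

lemma aux16_log_bound {ν : ℝ} (hν : 1 ≤ ν) {m : ℕ} (hm : 3 ≤ m) {x : ℝ} (hx : 0 < x) (hx1 : x ≤ 1) :
    |Real.log x| ^ ν ≤
      2 ^ ν * ((Real.log m) ^ ν + (2*ν) ^ ν * ((m:ℝ)*x) ^ (-(1:ℝ)/2)) := by
  have hν0 : (0:ℝ) < ν := by linarith
  have hm3 : (3:ℝ) ≤ (m:ℝ) := by exact_mod_cast hm
  have hz : 0 < (m:ℝ) * x := by positivity
  set A := Real.log m with hA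
  set B := max 0 (-(Real.log ((m:ℝ)*x))) with hB
  have hA0 : 0 ≤ A := Real.log_nonneg (by linarith)
  have hB0 : 0 ≤ B := le_max_left _ _
  have step1 : |Real.log x| ≤ A + B := by
    rw [abs_of_nonpos (Real.log_nonpos hx.le hx1)]
    have hsplit : Real.log ((m:ℝ)*x) = Real.log m + Real.log x :=
      Real.log_mul (by positivity) (ne_of_gt hx)
    have := le_max_right (0:ℝ) (-(Real.log ((m:ℝ)*x)))
    rw [hA, hB]; linarith
  have step2 : |Real.log x| ^ ν ≤ (A + B) ^ ν :=
    Real.rpow_le_rpow (abs_nonneg _) step1 hν0.le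
  have step3 : (A + B) ^ ν ≤ 2 ^ ν * (A ^ ν + B ^ ν) := by
    have hmax0 : 0 ≤ max A B := le_trans hA0 (le_max_left _ _)
    have h1 : (A + B) ^ ν ≤ (2 * max A B) ^ ν := by
      apply Real.rpow_le_rpow (by linarith) _ hν0.le
      rcases le_total A B with h | h
      · rw [max_eq_right h]; linarith
      · rw [max_eq_left h]; linarith
    have h2 : (2 * max A B) ^ ν = 2 ^ ν * (max A B) ^ ν :=
      Real.mul_rpow (by norm_num) hmax0
    have h3 : (max A B) ^ ν ≤ A ^ ν + B ^ ν := by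
      rcases max_cases A B with ⟨he, _⟩ | ⟨he, _⟩ <;> rw [he]
      · nlinarith [Real.rpow_nonneg hB0 ν]
      · nlinarith [Real.rpow_nonneg hA0 ν]
    calc (A + B) ^ ν ≤ (2 * max A B) ^ ν := h1
      _ = 2 ^ ν * (max A B) ^ ν := h2
      _ ≤ 2 ^ ν * (A ^ ν + B ^ ν) := by
          apply mul_le_mul_of_nonneg_left h3 (Real.rpow_nonneg (by norm_num) ν)
  have step4 : B ^ ν ≤ (2*ν) ^ ν * ((m:ℝ)*x) ^ (-(1:ℝ)/2) := by
    set z := (m:ℝ) * x with hzdef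
    by_cases h1 : 0 ≤ Real.log z
    · have : B = 0 := by rw [hB]; simp [h1]
      rw [this, Real.zero_rpow (ne_of_gt hν0)]
      positivity
    · push_neg at h1
      have hw : 0 < z ^ (-(1/(2*ν))) := Real.rpow_pos_of_pos hz _
      have hBle : B ≤ 2*ν * z ^ (-(1/(2*ν))) := by
        have hlog : -(1/(2*ν)) * Real.log z = Real.log (z ^ (-(1/(2*ν)))) :=
          (Real.log_rpow hz _).symm
        have hle : Real.log (z ^ (-(1/(2*ν)))) ≤ z ^ (-(1/(2*ν))) := by
          have := Real.log_le_sub_one_of_pos hw; linarith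
        have hrec : -(Real.log z) = 2*ν * (-(1/(2*ν)) * Real.log z) := by
          field_simp
        rw [hB]
        apply max_le (by positivity)
        rw [hrec, hlog]
        exact mul_le_mul_of_nonneg_left hle (by positivity)
      calc B ^ ν ≤ (2*ν * z ^ (-(1/(2*ν)))) ^ ν := Real.rpow_le_rpow hB0 hBle hν0.le
        _ = (2*ν) ^ ν * (z ^ (-(1/(2*ν)))) ^ ν := Real.mul_rpow (by positivity) hw.le
        _ = (2*ν) ^ ν * z ^ (-(1:ℝ)/2) := by
            have hexp : -(1/(2*ν)) * ν = (-1:ℝ)/2 := by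
              field_simp
            rw [← Real.rpow_mul hz.le, hexp]
  calc |Real.log x| ^ ν ≤ (A + B) ^ ν := step2
    _ ≤ 2 ^ ν * (A ^ ν + B ^ ν) := step3
    _ ≤ 2 ^ ν * (A ^ ν + (2*ν) ^ ν * ((m:ℝ)*x) ^ (-(1:ℝ)/2)) := by
        apply mul_le_mul_of_nonneg_left _ (Real.rpow_nonneg (by norm_num) ν)
        linarith

lemma aux16_ii01 : IntervalIntegrable (fun t : ℝ => |t| ^ ((-1:ℝ)/2)) volume 0 1 :=
  (intervalIntegrable_rpow' (r := (-1:ℝ)/2) (by norm_num) (a := 0) (b := 1)).congr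
    (fun t ht => by
        rw [Set.uIoc_of_le (by norm_num : (0:ℝ) ≤ 1)] at ht
        rw [abs_of_nonneg ht.1.le])

lemma aux16_iin : IntervalIntegrable (fun t : ℝ => |t| ^ ((-1:ℝ)/2)) volume (-1) 0 := by
  have h := (IntervalIntegrable.iff_comp_neg (a := 0) (b := 1) (f := fun t : ℝ => |t| ^ ((-1:ℝ)/2)) enorm_ne_top).mp aux16_ii01
  simpa using h.symm

lemma aux16_val01 : (∫ t in (0:ℝ)..1, |t| ^ ((-1:ℝ)/2)) = 2 := by
  rw [integral_congr (g := fun t : ℝ => t ^ ((-1:ℝ)/2))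
    (fun t ht => by
      rw [Set.uIcc_of_le (by norm_num : (0:ℝ) ≤ 1)] at ht
      simp only [abs_of_nonneg ht.1]),
    integral_rpow (Or.inl (by norm_num))]
  rw [show ((-1:ℝ)/2 + 1) = 1/2 by norm_num, Real.zero_rpow (by norm_num), Real.one_rpow]
  norm_num

lemma aux16_setIcc : (∫ t in Set.Icc (-1:ℝ) 1, |t| ^ ((-1:ℝ)/2)) = 4 := by
  rw [integral_Icc_eq_integral_Ioc, ← integral_of_le (by norm_num : (-1:ℝ) ≤ 1),
    ← integral_add_adjacent_intervals aux16_iin aux16_ii01]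
  have hneg : (∫ t in (-1:ℝ)..0, |t| ^ ((-1:ℝ)/2)) = ∫ t in (0:ℝ)..1, |t| ^ ((-1:ℝ)/2) := by
    have := integral_comp_neg (a := (0:ℝ)) (b := 1) (fun t : ℝ => |t| ^ ((-1:ℝ)/2))
    simp only [abs_neg, neg_zero] at this
    exact this.symm
  rw [hneg, aux16_val01]; norm_num

lemma aux16_intIcc : IntegrableOn (fun t : ℝ => |t| ^ ((-1:ℝ)/2)) (Set.Icc (-1:ℝ) 1) volume := by
  rw [integrableOn_Icc_iff_integrableOn_Ioc]
  exact (aux16_iin.trans aux16_ii01).1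

lemma aux16_cont {a : ℝ} (ha : 0 ≤ a) : Continuous (fun t : ℝ => (1 - t^2) ^ a) :=
  (Real.continuous_rpow_const ha).comp (continuous_const.sub (continuous_pow 2))

lemma aux16_intOnIcc {a : ℝ} (ha : 0 ≤ a) :
    IntegrableOn (fun t : ℝ => (1 - t^2) ^ a) (Set.Icc (-1:ℝ) 1) volume := by
  apply Integrable.mono' (integrable_const (1:ℝ))
  · exact (aux16_cont ha).aestronglyMeasurable
  · filter_upwards [ae_restrict_mem measurableSet_Icc] with t ht
    rw [Real.norm_eq_abs, abs_of_nonneg (Real.rpow_nonneg (by nlinarith [ht.1, ht.2] : (0:ℝ) ≤ 1 - t^2) a)]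
    exact Real.rpow_le_one (by nlinarith [ht.1, ht.2]) (by nlinarith [sq_nonneg t]) ha

lemma aux16_gauss_bound {a : ℝ} (ha : 0 < a) :
    (∫ t in Set.Icc (-1:ℝ) 1, (1 - t^2) ^ a) ≤ Real.sqrt (π / a) := by
  have hint : Integrable (fun t : ℝ => Real.exp (-a * t^2)) := integrable_exp_neg_mul_sq ha
  have step1 : (∫ t in Set.Icc (-1:ℝ) 1, (1 - t^2) ^ a)
      ≤ ∫ t in Set.Icc (-1:ℝ) 1, Real.exp (-a * t^2) := by
    apply setIntegral_mono_on (aux16_intOnIcc ha.le) hint.integrableOn measurableSet_Icc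
    intro t ht
    have h1 : (0:ℝ) ≤ 1 - t^2 := by nlinarith [ht.1, ht.2]
    have h2 : 1 - t^2 ≤ Real.exp (-t^2) := by
      have := Real.add_one_le_exp (-t^2); linarith
    calc (1 - t^2) ^ a ≤ (Real.exp (-t^2)) ^ a := Real.rpow_le_rpow h1 h2 ha.le
      _ = Real.exp (-a * t^2) := by
          rw [← Real.exp_log (Real.exp_pos (-t^2)), ← Real.exp_mul, Real.log_exp]
          ring_nf
  have step2 : (∫ t in Set.Icc (-1:ℝ) 1, Real.exp (-a * t^2)) ≤ ∫ t : ℝ, Real.exp (-a * t^2) :=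
    setIntegral_le_integral hint (Filter.Eventually.of_forall fun t => (Real.exp_pos _).le)
  rw [integral_gaussian] at step2
  linarith

end aux16

set_option maxHeartbeats 1000000 in
/-- Log-moment bound for the density of one coordinate of a uniform point on `S^{m-1}`:
with `g(t) = c_m (1-t²)^{(m-3)/2}` and `c_m = Γ(m/2)/(√π Γ((m-1)/2))`, for every
`ν ≥ 1` there is `M_ν` independent of `m ≥ 3` such that
`∫_{-1}^1 |log|t||^ν g(t) dt ≤ M_ν (log m)^ν`. -/
theorem stmt16 (ν : ℝ) (hν : 1 ≤ ν) :
    ∃ M : ℝ, ∀ m : ℕ, 3 ≤ m →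
      (∫ t in Set.Icc (-1 : ℝ) 1,
          abs (Real.log (abs t)) ^ ν *
            (Real.Gamma ((m : ℝ) / 2) / (Real.sqrt π * Real.Gamma (((m : ℝ) - 1) / 2)) *
              (1 - t ^ 2) ^ (((m : ℝ) - 3) / 2)))
        ≤ M * (Real.log m) ^ ν := by
  have hν0 : (0:ℝ) < ν := by linarith
  refine ⟨2 * 2 ^ ν * (1 + (2*ν) ^ ν), fun m hm => ?_⟩
  have hm3 : (3:ℝ) ≤ (m:ℝ) := by exact_mod_cast hm
  set a : ℝ := ((m:ℝ) - 3) / 2 with ha_def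
  have ha : 0 ≤ a := by rw [ha_def]; linarith
  set x : ℝ := ((m:ℝ) - 1) / 2 with hx_def
  have hx : 0 < x := by rw [hx_def]; linarith
  set c : ℝ := Real.Gamma ((m : ℝ) / 2) / (Real.sqrt π * Real.Gamma (((m : ℝ) - 1) / 2)) with hc_def
  have hGx : 0 < Real.Gamma x := Real.Gamma_pos_of_pos hx
  have hsπ : 0 < Real.sqrt π := Real.sqrt_pos.mpr pi_pos
  have h1π : 1 ≤ Real.sqrt π := by
    rw [show (1:ℝ) = Real.sqrt 1 by simp]
    exact Real.sqrt_le_sqrt (by linarith [pi_gt_three])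
  have hc0 : 0 < c := by
    rw [hc_def]
    apply div_pos (Real.Gamma_pos_of_pos (by linarith)) (by positivity)
  have hcle : c ≤ Real.sqrt x / Real.sqrt π := by
    rw [hc_def, div_le_div_iff₀ (by positivity) hsπ]
    have hkey := aux16_gamma_half_le hx
    rw [show x + 1/2 = (m:ℝ)/2 by rw [hx_def]; ring] at hkey
    rw [← hx_def]
    nlinarith [Real.sqrt_nonneg x]
  -- value and bound of I1
  have hI1nonneg : 0 ≤ ∫ t in Set.Icc (-1:ℝ) 1, (1 - t^2) ^ a :=
    setIntegral_nonneg measurableSet_Icc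
      (fun t ht => Real.rpow_nonneg (by nlinarith [ht.1, ht.2]) a)
  set I1 : ℝ := ∫ t in Set.Icc (-1:ℝ) 1, (1 - t^2) ^ a with hI1_def
  have hcI1 : c * I1 ≤ 2 := by
    rcases eq_or_lt_of_le hm3 with h3 | h4
    · -- m = 3, a = 0
      have ha0 : a = 0 := by rw [ha_def, ← h3]; norm_num
      have hI1val : I1 = 2 := by
        rw [hI1_def, ha0]
        simp only [Real.rpow_zero]
        rw [setIntegral_const, Real.volume_real_Icc]
        norm_num
      have hx1 : x = 1 := by rw [hx_def, ← h3]; norm_num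
      have : c ≤ 1 := by
        rw [hx1] at hcle
        simpa using hcle.trans (by rw [Real.sqrt_one]; exact div_le_one_of_le₀ h1π (by positivity))
      rw [hI1val]; linarith
    · -- m ≥ 4
      have ha2 : 0 < a := by rw [ha_def]; norm_num at h4 ⊢; nlinarith [(by exact_mod_cast Nat.lt_iff_add_one_le.mp (by exact_mod_cast h4) : (4:ℝ) ≤ (m:ℝ))]
      have hI1le : I1 ≤ Real.sqrt (π / a) := aux16_gauss_bound ha2
      have hcIle : c * I1 ≤ (Real.sqrt x / Real.sqrt π) * Real.sqrt (π / a) :=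
        mul_le_mul hcle hI1le hI1nonneg (by positivity)
      have hm4 : (4:ℝ) ≤ (m:ℝ) := by
        have : 4 ≤ m := by exact_mod_cast h4
        exact_mod_cast this
      have hprod : (Real.sqrt x / Real.sqrt π) * Real.sqrt (π / a) ≤ 2 := by
        set u := (Real.sqrt x / Real.sqrt π) * Real.sqrt (π / a) with hu
        have hu0 : 0 ≤ u := by positivity
        have husq : u ^ 2 = x / a := by
          rw [hu, mul_pow, div_pow, Real.sq_sqrt hx.le, Real.sq_sqrt pi_pos.le,
            Real.sq_sqrt (by positivity : (0:ℝ) ≤ π / a)]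
          field_simp
        have hxa : x / a ≤ 3 := by
          rw [hx_def, ha_def, div_le_iff₀ (by rw [ha_def] at ha2; linarith [ha2])]
          rw [ha_def] at *
          nlinarith
        nlinarith
      linarith
  -- bound on c * m^(-1/2) * 4
  have hsm : 0 < Real.sqrt (m:ℝ) := Real.sqrt_pos.mpr (by linarith)
  have hmrpow : ((m:ℝ)) ^ ((-1:ℝ)/2) = (Real.sqrt (m:ℝ))⁻¹ := by
    rw [show ((-1:ℝ)/2) = -(1/2:ℝ) by norm_num, Real.rpow_neg (Nat.cast_nonneg m),
      ← Real.sqrt_eq_rpow]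
  have hcm2 : c * ((m:ℝ)) ^ ((-1:ℝ)/2) * 4 ≤ 2 := by
    rw [hmrpow]
    have hcsq : c ^ 2 ≤ x / π := by
      have := mul_le_mul hcle hcle hc0.le (by positivity)
      calc c ^ 2 = c * c := sq c
        _ ≤ (Real.sqrt x / Real.sqrt π) * (Real.sqrt x / Real.sqrt π) := this
        _ = x / π := by
            rw [div_mul_div_comm, Real.mul_self_sqrt hx.le, Real.mul_self_sqrt pi_pos.le]
    have h2c : 2 * c ≤ Real.sqrt (m:ℝ) := by
      rw [show Real.sqrt (m:ℝ) = Real.sqrt (m:ℝ) from rfl]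
      have h4c : (2*c)^2 ≤ (m:ℝ) := by
        have hπ3 : (3:ℝ) < π := pi_gt_three
        have : x / π ≤ x / 3 := by
          apply div_le_div_of_nonneg_left hx.le (by norm_num) hπ3.le
        rw [hx_def] at this
        nlinarith
      exact (Real.le_sqrt (by linarith) (by linarith)).mpr h4c
    rw [show c * (Real.sqrt (m:ℝ))⁻¹ * 4 = (4*c) / Real.sqrt (m:ℝ) by ring]
    rw [div_le_iff₀ hsm]
    linarith
  -- the dominating function
  set K : ℝ := (2*ν) ^ ν with hK
  have hK0 : 0 ≤ K := Real.rpow_nonneg (by positivity) ν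
  have h2ν0 : (0:ℝ) < 2 ^ ν := Real.rpow_pos_of_pos (by norm_num) ν
  have hlogm0 : 0 ≤ Real.log m := Real.log_nonneg (by linarith)
  have hlogm1 : 1 ≤ (Real.log m) ^ ν := by
    apply Real.one_le_rpow _ hν0.le
    rw [Real.le_log_iff_exp_le (by linarith : (0:ℝ) < (m:ℝ))]
    calc Real.exp 1 ≤ 2.7182818286 := Real.exp_one_lt_d9.le
      _ ≤ 3 := by norm_num
      _ ≤ (m:ℝ) := hm3
  have hlogmν0 : 0 ≤ (Real.log m) ^ ν := Real.rpow_nonneg hlogm0 ν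
  set C1 : ℝ := 2 ^ ν * (Real.log m) ^ ν * c with hC1
  set C2 : ℝ := 2 ^ ν * K * c * ((m:ℝ)) ^ ((-1:ℝ)/2) with hC2
  have hC10 : 0 ≤ C1 := by rw [hC1]; positivity
  have hC20 : 0 ≤ C2 := by
    rw [hC2]
    have : (0:ℝ) ≤ ((m:ℝ)) ^ ((-1:ℝ)/2) := Real.rpow_nonneg (Nat.cast_nonneg m) _
    positivity
  have hhint : Integrable (fun t : ℝ => C1 * (1 - t^2) ^ a + C2 * |t| ^ ((-1:ℝ)/2))
      (volume.restrict (Set.Icc (-1:ℝ) 1)) :=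
    ((aux16_intOnIcc ha).const_mul C1).add ((aux16_intIcc).const_mul C2)
  have hmono : (∫ t in Set.Icc (-1 : ℝ) 1,
        abs (Real.log (abs t)) ^ ν * (c * (1 - t ^ 2) ^ a))
      ≤ ∫ t in Set.Icc (-1:ℝ) 1, (C1 * (1 - t^2) ^ a + C2 * |t| ^ ((-1:ℝ)/2)) := by
    apply integral_mono_of_nonneg _ hhint
    · -- pointwise bound a.e.
      filter_upwards [ae_restrict_mem measurableSet_Icc] with t ht
      have h1t : (0:ℝ) ≤ 1 - t^2 := by nlinarith [ht.1, ht.2]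
      have hP0 : 0 ≤ (1 - t^2) ^ a := Real.rpow_nonneg h1t a
      have hP1 : (1 - t^2) ^ a ≤ 1 :=
        Real.rpow_le_one h1t (by nlinarith [sq_nonneg t]) ha
      by_cases ht0 : t = 0
      · subst ht0
        simp only [abs_zero, Real.log_zero, Real.zero_rpow (ne_of_gt hν0), zero_mul,
          Real.zero_rpow (show ((-1:ℝ)/2) ≠ 0 by norm_num), mul_zero, add_zero]
        exact mul_nonneg hC10 hP0
      · have habs : 0 < |t| := abs_pos.mpr ht0
        have habs1 : |t| ≤ 1 := abs_le.mpr ⟨ht.1, ht.2⟩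
        have hlb := aux16_log_bound hν hm habs habs1
        have hzsplit : ((m:ℝ) * |t|) ^ (-(1:ℝ)/2)
            = ((m:ℝ)) ^ ((-1:ℝ)/2) * |t| ^ ((-1:ℝ)/2) :=
          Real.mul_rpow (Nat.cast_nonneg m) (abs_nonneg t)
        rw [hzsplit] at hlb
        have hz0 : 0 ≤ ((m:ℝ)) ^ ((-1:ℝ)/2) * |t| ^ ((-1:ℝ)/2) := by
          have h1 : (0:ℝ) ≤ ((m:ℝ)) ^ ((-1:ℝ)/2) := Real.rpow_nonneg (Nat.cast_nonneg m) _
          have h2 : (0:ℝ) ≤ |t| ^ ((-1:ℝ)/2) := Real.rpow_nonneg (abs_nonneg t) _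
          positivity
      -- f t = |log|t||^ν * (c * P) ≤ (2^ν((logm)^ν + K z)) * (c P) = C1 P + 2^ν K z c P ≤ C1 P + C2 |t|^...
        have step : abs (Real.log (abs t)) ^ ν * (c * (1 - t ^ 2) ^ a)
            ≤ (2 ^ ν * ((Real.log m) ^ ν + K * (((m:ℝ)) ^ ((-1:ℝ)/2) * |t| ^ ((-1:ℝ)/2))))
              * (c * (1 - t ^ 2) ^ a) :=
          mul_le_mul_of_nonneg_right hlb (by positivity)
        have h2 : (2 ^ ν * ((Real.log m) ^ ν + K * (((m:ℝ)) ^ ((-1:ℝ)/2) * |t| ^ ((-1:ℝ)/2))))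
              * (c * (1 - t ^ 2) ^ a)
            = C1 * (1 - t^2) ^ a
              + (2 ^ ν * K * c * (((m:ℝ)) ^ ((-1:ℝ)/2) * |t| ^ ((-1:ℝ)/2))) * (1 - t^2) ^ a := by
          rw [hC1]; ring
        have h3 : (2 ^ ν * K * c * (((m:ℝ)) ^ ((-1:ℝ)/2) * |t| ^ ((-1:ℝ)/2))) * (1 - t^2) ^ a
            ≤ C2 * |t| ^ ((-1:ℝ)/2) := by
          rw [hC2]
          have hcoef : 0 ≤ 2 ^ ν * K * c * (((m:ℝ)) ^ ((-1:ℝ)/2) * |t| ^ ((-1:ℝ)/2)) := by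
            positivity
          calc (2 ^ ν * K * c * (((m:ℝ)) ^ ((-1:ℝ)/2) * |t| ^ ((-1:ℝ)/2))) * (1 - t^2) ^ a
              ≤ (2 ^ ν * K * c * (((m:ℝ)) ^ ((-1:ℝ)/2) * |t| ^ ((-1:ℝ)/2))) * 1 :=
                mul_le_mul_of_nonneg_left hP1 hcoef
            _ = 2 ^ ν * K * c * ((m:ℝ)) ^ ((-1:ℝ)/2) * |t| ^ ((-1:ℝ)/2) := by ring
        calc abs (Real.log (abs t)) ^ ν * (c * (1 - t ^ 2) ^ a)
            ≤ (2 ^ ν * ((Real.log m) ^ ν + K * (((m:ℝ)) ^ ((-1:ℝ)/2) * |t| ^ ((-1:ℝ)/2))))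
              * (c * (1 - t ^ 2) ^ a) := step
          _ = C1 * (1 - t^2) ^ a
              + (2 ^ ν * K * c * (((m:ℝ)) ^ ((-1:ℝ)/2) * |t| ^ ((-1:ℝ)/2))) * (1 - t^2) ^ a := h2
          _ ≤ C1 * (1 - t^2) ^ a + C2 * |t| ^ ((-1:ℝ)/2) := by linarith
    · -- nonnegativity of f a.e.
      filter_upwards [ae_restrict_mem measurableSet_Icc] with t ht
      have h1t : (0:ℝ) ≤ 1 - t^2 := by nlinarith [ht.1, ht.2]
      have hP0 : 0 ≤ (1 - t^2) ^ a := Real.rpow_nonneg h1t a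
      have hL0 : 0 ≤ abs (Real.log (abs t)) ^ ν := Real.rpow_nonneg (abs_nonneg _) ν
      positivity
  have hval : (∫ t in Set.Icc (-1:ℝ) 1, (C1 * (1 - t^2) ^ a + C2 * |t| ^ ((-1:ℝ)/2)))
      = C1 * I1 + C2 * 4 := by
    rw [integral_add ((aux16_intOnIcc ha).const_mul C1) ((aux16_intIcc).const_mul C2),
      MeasureTheory.integral_const_mul, MeasureTheory.integral_const_mul, aux16_setIcc, hI1_def]
  have hfinal : C1 * I1 + C2 * 4 ≤ (2 * 2 ^ ν * (1 + (2*ν) ^ ν)) * (Real.log m) ^ ν := by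
    have e1 : C1 * I1 = 2 ^ ν * (Real.log m) ^ ν * (c * I1) := by rw [hC1]; ring
    have e2 : C2 * 4 = 2 ^ ν * K * (c * ((m:ℝ)) ^ ((-1:ℝ)/2) * 4) := by rw [hC2]; ring
    have b1 : C1 * I1 ≤ 2 ^ ν * (Real.log m) ^ ν * 2 := by
      rw [e1]
      exact mul_le_mul_of_nonneg_left hcI1 (by positivity)
    have b2 : C2 * 4 ≤ 2 ^ ν * K * 2 := by
      rw [e2]
      exact mul_le_mul_of_nonneg_left hcm2 (by positivity)
    have hb3 : 2 ^ ν * K * 2 ≤ 2 ^ ν * K * 2 * (Real.log m) ^ ν := by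
      nlinarith
    nlinarith
  calc (∫ t in Set.Icc (-1 : ℝ) 1,
          abs (Real.log (abs t)) ^ ν * (c * (1 - t ^ 2) ^ a))
      ≤ ∫ t in Set.Icc (-1:ℝ) 1, (C1 * (1 - t^2) ^ a + C2 * |t| ^ ((-1:ℝ)/2)) := hmono
    _ = C1 * I1 + C2 * 4 := hval
    _ ≤ (2 * 2 ^ ν * (1 + (2*ν) ^ ν)) * (Real.log m) ^ ν := hfinal
end
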